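/- arXiv:1101.2188 — 9 statements merged into one kernel-verified Lean document; each statement's English description precedes it below -/
import Mathlib

section
/- Let E be a nonzero integral lattice and let h ∈ O(E) have finite order n. Form the SDC lattice L = M + N in E ⊥ E. Then there is an injective group homomorphism φ from the wreath product (ℤ/n) ≀ (ℤ/2), realized as the semidirect product ((ℤ/n) × (ℤ/n)) ⋊ (ℤ/2) in which the nontrivial element of ℤ/2 swaps the two factors, into the group of isometries of L (ℤ-linear automorphisms of L preserving the restricted bilinear form), such that φ((a,b),0) is the restriction to L of the map (x,y) ↦ (hᵃx, hᵇy), φ((0,0),1) is the restriction to L of the map t_M : (x,y) ↦ (−y,−x), and φ((−1,1),1) is the restriction to L of the map t_N : (x,y) ↦ (−h⁻¹y, −hx). -/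
/-- The homomorphism `ℤ/2 →* MulAut (K × K)` whose nontrivial value swaps the two
factors; it realizes the wreathing action of the wreath product `K ≀ (ℤ/2)`. -/
def swapHom (K : Type*) [CommGroup K] : Multiplicative (ZMod 2) →* MulAut (K × K) where
  toFun g := if Multiplicative.toAdd g = 0 then 1 else MulEquiv.prodComm
  map_one' := by simp
  map_mul' x y := by
    have hswap : (MulEquiv.prodComm : MulAut (K × K)) * MulEquiv.prodComm = 1 := by
      ext p <;> rfl
    have hc : ∀ a : ZMod 2, a = 0 ∨ a = 1 := by decide
    rcases hc (Multiplicative.toAdd x) with h1 | h1 <;>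
      rcases hc (Multiplicative.toAdd y) with h2 | h2 <;>
        simp [toAdd_mul, h1, h2, hswap, (by decide : (1 : ZMod 2) + 1 = 0),
          (by decide : (1 : ZMod 2) ≠ 0)]

/-- The group of isometries of a sublattice `L` (`ℤ`-linear automorphisms of `L`
preserving the restriction of the bilinear form `Bf`). -/
def isomSubgroup {V : Type*} [AddCommGroup V] [Module ℤ V]
    (Bf : V → V → ℤ) (L : Submodule ℤ V) : Subgroup (L ≃ₗ[ℤ] L) where
  carrier := {f | ∀ v w : L, Bf (f v) (f w) = Bf v w}
  one_mem' := fun _ _ => rfl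
  mul_mem' := by
    intro f g hf hg v w
    exact (hf (g v) (g w)).trans (hg v w)
  inv_mem' := by
    intro f hf v w
    have := hf (f.symm v) (f.symm w)
    rw [f.apply_symm_apply, f.apply_symm_apply] at this
    exact this.symm


namespace SDCAux
variable {E : Type*} [AddCommGroup E]

/-- `t_M : (x,y) ↦ (-y,-x)` -/
def tM (E : Type*) [AddCommGroup E] : (E × E) ≃ₗ[ℤ] (E × E) :=
  (LinearEquiv.prodComm ℤ E E).trans (LinearEquiv.neg ℤ)

@[simp] lemma tM_apply (v : E × E) : tM E v = (-v.2, -v.1) := rfl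

lemma tM_mul_tM : tM E * tM E = 1 := by
  apply LinearEquiv.toLinearMap_injective; ext v <;> simp [tM]

/-- the homomorphism `ZMod n →* (E ≃ₗ E)`, `a ↦ h ^ a.val`. -/
def Pm (h : E ≃ₗ[ℤ] E) (n : ℕ) (hn : 0 < n) (hord : orderOf h = n) :
    Multiplicative (ZMod n) →* (E ≃ₗ[ℤ] E) where
  toFun a := h ^ (Multiplicative.toAdd a).val
  map_one' := by
    haveI : NeZero n := ⟨hn.ne'⟩
    simp
  map_mul' x y := by
    haveI : NeZero n := ⟨hn.ne'⟩
    show h ^ (Multiplicative.toAdd (x * y)).val = _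
    have hh : h ^ (((Multiplicative.toAdd x).val + (Multiplicative.toAdd y).val) % orderOf h)
        = h ^ ((Multiplicative.toAdd x).val + (Multiplicative.toAdd y).val) :=
      pow_mod_orderOf _ _
    rw [hord] at hh
    rw [toAdd_mul, ZMod.val_add, hh, pow_add]

/-- `f₁ : (ZMod n)² →* ((E×E) ≃ₗ (E×E))`, `(a,b) ↦ h^a × h^b`. -/
def F1 (h : E ≃ₗ[ℤ] E) (n : ℕ) (hn : 0 < n) (hord : orderOf h = n) :
    (Multiplicative (ZMod n) × Multiplicative (ZMod n)) →* ((E × E) ≃ₗ[ℤ] (E × E)) where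
  toFun p := LinearEquiv.prodCongr (Pm h n hn hord p.1) (Pm h n hn hord p.2)
  map_one' := by
    apply LinearEquiv.ext; intro v
    show ((Pm h n hn hord 1) v.1, (Pm h n hn hord 1) v.2) = v
    rw [map_one]; rfl
  map_mul' p q := by
    apply LinearEquiv.ext; intro v
    show ((Pm h n hn hord (p.1 * q.1)) v.1, (Pm h n hn hord (p.2 * q.2)) v.2) = _
    rw [map_mul, map_mul]
    rfl

@[simp] lemma F1_apply (h : E ≃ₗ[ℤ] E) (n : ℕ) (hn : 0 < n) (hord : orderOf h = n)
    (p) (v : E × E) :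
    F1 h n hn hord p v = ((h ^ (Multiplicative.toAdd p.1).val) v.1,
      (h ^ (Multiplicative.toAdd p.2).val) v.2) := rfl

/-- `f₂ : ZMod 2 →* ((E×E) ≃ₗ (E×E))` sending the generator to `t_M`. -/
def F2 (E : Type*) [AddCommGroup E] :
    Multiplicative (ZMod 2) →* ((E × E) ≃ₗ[ℤ] (E × E)) where
  toFun g := if Multiplicative.toAdd g = 0 then 1 else tM E
  map_one' := by simp
  map_mul' x y := by
    have hc : ∀ a : ZMod 2, a = 0 ∨ a = 1 := by decide
    rcases hc (Multiplicative.toAdd x) with h1 | h1 <;>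
      rcases hc (Multiplicative.toAdd y) with h2 | h2 <;>
        simp [toAdd_mul, h1, h2, tM_mul_tM, (by decide : (1 : ZMod 2) + 1 = 0),
          (by decide : (1 : ZMod 2) ≠ 0)]

section Membership

variable (h : E ≃ₗ[ℤ] E) {L : Submodule ℤ (E × E)}
variable (hL : L = LinearMap.graph (LinearMap.id : E →ₗ[ℤ] E) ⊔ LinearMap.graph h.toLinearMap)

lemma map_eq_of_le {f : (E × E) ≃ₗ[ℤ] (E × E)}
    (h1 : L.map f.toLinearMap ≤ L) (h2 : L.map f.symm.toLinearMap ≤ L) :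
    L.map f.toLinearMap = L := by
  refine le_antisymm h1 fun v hv => ?_
  exact ⟨f.symm v, h2 ⟨v, hv, rfl⟩, f.apply_symm_apply v⟩

include h hL

lemma mem_M (x : E) : ((x, x) : E × E) ∈ L := by
  rw [hL]
  exact Submodule.mem_sup_left (by rw [LinearMap.mem_graph_iff]; rfl)

lemma mem_N (x : E) : ((x, h x) : E × E) ∈ L := by
  rw [hL]
  exact Submodule.mem_sup_right (by rw [LinearMap.mem_graph_iff]; rfl)

lemma mem_pair_le {i j : ℕ} (hij : i ≤ j) (x : E) :
    (((h ^ i) x, (h ^ j) x) : E × E) ∈ L := by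
  set y := ∑ k ∈ Finset.range (j - i), (h ^ (i + k)) x with hy
  have hhy : h y = ∑ k ∈ Finset.range (j - i), (h ^ (i + k + 1)) x := by
    rw [hy, map_sum]
    refine Finset.sum_congr rfl fun k _ => ?_
    rw [pow_succ']
    rfl
  have tel : h y - y = (h ^ j) x - (h ^ i) x := by
    rw [hhy, hy, ← Finset.sum_sub_distrib]
    have := Finset.sum_range_sub (f := fun k => (h ^ (i + k)) x) (j - i)
    simpa [Nat.add_sub_cancel' hij, add_assoc] using this
  have hdecomp : (((h ^ i) x, (h ^ j) x) : E × E)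
      = (((h ^ i) x - y, (h ^ i) x - y) : E × E) + (y, h y) := by
    have h2 : (h ^ i) x - y + h y = (h ^ j) x := by
      have e1 : (h ^ i) x - y + h y = (h ^ i) x + (h y - y) := by abel
      rw [e1, tel]; abel
    ext
    · simp
    · simpa using h2.symm
  rw [hdecomp]
  exact L.add_mem (mem_M h hL _) (mem_N h hL _)

lemma mem_pair (n : ℕ) (hn : 0 < n) (hord : orderOf h = n) (i j : ℕ) (x : E) :
    (((h ^ i) x, (h ^ j) x) : E × E) ∈ L := by
  have hpow : h ^ (j + n * i) = h ^ j := by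
    rw [pow_add, pow_mul]
    rw [← hord, pow_orderOf_eq_one, one_pow, mul_one]
  have hij : i ≤ j + n * i :=
    le_trans (Nat.le_mul_of_pos_left i hn) (Nat.le_add_left _ _)
  have := mem_pair_le h hL hij x
  rwa [hpow] at this


lemma F1_map_le (n : ℕ) (hn : 0 < n) (hord : orderOf h = n) (p) :
    L.map (F1 h n hn hord p).toLinearMap ≤ L := by
  rintro _ ⟨v, hv, rfl⟩
  rw [hL] at hv
  rcases Submodule.mem_sup.mp hv with ⟨m, hm, w, hw, rfl⟩
  rw [LinearMap.mem_graph_iff] at hm hw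
  have key : (F1 h n hn hord p).toLinearMap (m + w)
      = (((h ^ (Multiplicative.toAdd p.1).val) m.1,
          (h ^ (Multiplicative.toAdd p.2).val) m.1) : E × E)
        + (((h ^ (Multiplicative.toAdd p.1).val) w.1,
          (h ^ ((Multiplicative.toAdd p.2).val + 1)) w.1) : E × E) := by
    have hm2 : m.2 = m.1 := hm
    have hm' : m = (m.1, m.1) := Prod.ext rfl hm2
    have hw' : w = (w.1, h w.1) := Prod.ext rfl hw
    rw [hm', hw']
    show ((h ^ (Multiplicative.toAdd p.1).val) (m.1 + w.1),
      (h ^ (Multiplicative.toAdd p.2).val) (m.1 + h w.1)) = _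
    rw [map_add, map_add]
    have : (h ^ (Multiplicative.toAdd p.2).val) (h w.1)
        = (h ^ ((Multiplicative.toAdd p.2).val + 1)) w.1 := by
      rw [pow_succ]; rfl
    rw [this]
    rfl
  rw [key]
  exact L.add_mem (mem_pair h hL n hn hord _ _ _) (mem_pair h hL n hn hord _ _ _)

lemma F1_map_eq (n : ℕ) (hn : 0 < n) (hord : orderOf h = n) (p) :
    L.map (F1 h n hn hord p).toLinearMap = L := by
  refine map_eq_of_le (F1_map_le h hL n hn hord p) ?_
  have h2 := F1_map_le h hL n hn hord p⁻¹
  have h3 : F1 h n hn hord p⁻¹ = (F1 h n hn hord p)⁻¹ := MonoidHom.map_inv _ _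
  rw [h3] at h2
  exact h2

lemma tM_map_le : L.map (tM E).toLinearMap ≤ L := by
  rintro _ ⟨v, hv, rfl⟩
  rw [hL] at hv
  rcases Submodule.mem_sup.mp hv with ⟨m, hm, w, hw, rfl⟩
  rw [LinearMap.mem_graph_iff] at hm hw
  have key : (tM E).toLinearMap (m + w)
      = ((-m.1, -m.1) : E × E) + (((- h w.1 - w.1, - h w.1 - w.1) : E × E) + (w.1, h w.1)) := by
    have h1 : (tM E).toLinearMap (m + w) = (-(m.2 + w.2), -(m.1 + w.1)) := rfl
    have hm2 : m.2 = m.1 := hm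
    rw [h1, hm2]
    have : w.2 = h w.1 := hw
    rw [this]
    ext
    · show -(m.1 + h w.1) = -m.1 + (-h w.1 - w.1 + w.1); abel
    · show -(m.1 + w.1) = -m.1 + (-h w.1 - w.1 + h w.1); abel
  rw [key]
  exact L.add_mem (mem_M h hL _) (L.add_mem (mem_M h hL _) (mem_N h hL _))

lemma tM_map_eq : L.map (tM E).toLinearMap = L := by
  refine map_eq_of_le ?_ ?_
  · exact tM_map_le h hL
  · have hsymm : (tM E).symm = tM E := by
      have := tM_mul_tM (E := E)
      have h2 : (tM E)⁻¹ = tM E := inv_eq_of_mul_eq_one_right this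
      rw [← h2]; rfl
    rw [hsymm]
    exact tM_map_le h hL

lemma F2_map_eq (g) : L.map ((F2 E) g).toLinearMap = L := by
  by_cases hg : Multiplicative.toAdd g = 0
  · have : F2 E g = 1 := if_pos hg
    rw [this]
    exact Submodule.map_id L
  · have : F2 E g = tM E := if_neg hg
    rw [this]
    exact tM_map_eq h hL

end Membership

section Isom

variable (B : E →ₗ[ℤ] E →ₗ[ℤ] ℤ)

lemma B_pow (h : E ≃ₗ[ℤ] E) (hB : ∀ x y, B (h x) (h y) = B x y) (i : ℕ) :
    ∀ x y : E, B ((h ^ i) x) ((h ^ i) y) = B x y := by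
  induction i with
  | zero => intro x y; rfl
  | succ i ih =>
    intro x y
    have e : ∀ z : E, (h ^ (i + 1)) z = (h ^ i) (h z) := by
      intro z; rw [pow_succ]; rfl
    rw [e, e, ih, hB]

/-- The subgroup of linear automorphisms of `E × E` preserving the orthogonal-sum form
and the submodule `L`. -/
def bigIsom (L : Submodule ℤ (E × E)) : Subgroup ((E × E) ≃ₗ[ℤ] (E × E)) where
  carrier := {f | (∀ v w : E × E, B (f v).1 (f w).1 + B (f v).2 (f w).2
      = B v.1 w.1 + B v.2 w.2) ∧ L.map f.toLinearMap = L}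
  one_mem' := ⟨fun _ _ => rfl, Submodule.map_id L⟩
  mul_mem' := by
    intro f g hf hg
    refine ⟨fun v w => (hf.1 (g v) (g w)).trans (hg.1 v w), ?_⟩
    have e : ((f * g : (E × E) ≃ₗ[ℤ] (E × E)) : (E × E) →ₗ[ℤ] (E × E))
        = (f : (E × E) →ₗ[ℤ] (E × E)) ∘ₗ (g : (E × E) →ₗ[ℤ] (E × E)) := rfl
    rw [e, Submodule.map_comp, hg.2, hf.2]
  inv_mem' := by
    intro f hf
    constructor
    · intro v w
      have := hf.1 (f.symm v) (f.symm w)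
      rw [f.apply_symm_apply, f.apply_symm_apply] at this
      exact this.symm
    · have e : ((f⁻¹ : (E × E) ≃ₗ[ℤ] (E × E)) : (E × E) →ₗ[ℤ] (E × E))
          ∘ₗ ((f : (E × E) ≃ₗ[ℤ] (E × E)) : (E × E) →ₗ[ℤ] (E × E)) = LinearMap.id := by
        apply LinearMap.ext; intro v
        exact f.symm_apply_apply v
      calc L.map (f⁻¹ : (E × E) ≃ₗ[ℤ] (E × E)).toLinearMap
          = (L.map f.toLinearMap).map (f⁻¹ : (E × E) ≃ₗ[ℤ] (E × E)).toLinearMap := by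
            rw [hf.2]
        _ = L.map (((f⁻¹ : (E × E) ≃ₗ[ℤ] (E × E)) : (E × E) →ₗ[ℤ] (E × E))
              ∘ₗ (f : (E × E) →ₗ[ℤ] (E × E))) := by rw [Submodule.map_comp]
        _ = L := by rw [e, Submodule.map_id]

/-- Restriction of an element of `bigIsom` to `L`. -/
def resAux (L : Submodule ℤ (E × E)) (f : bigIsom B L) : L ≃ₗ[ℤ] L :=
  LinearEquiv.ofSubmodules f.1 L L f.2.2

lemma resAux_coe (L : Submodule ℤ (E × E)) (f : bigIsom B L) (v : L) :
    ((resAux B L f v : L) : E × E) = f.1 (v : E × E) :=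
  LinearEquiv.ofSubmodules_apply _ _ _

/-- Restriction to `L` as a monoid hom. -/
def resHom (L : Submodule ℤ (E × E)) : bigIsom B L →* (L ≃ₗ[ℤ] L) where
  toFun := resAux B L
  map_one' := by
    apply LinearEquiv.ext; intro v
    apply Subtype.ext
    rw [resAux_coe]
    rfl
  map_mul' f g := by
    apply LinearEquiv.ext; intro v
    apply Subtype.ext
    have h1 : (((resAux B L f * resAux B L g) v : L) : E × E)
        = f.1 (g.1 (v : E × E)) := by
      show ((resAux B L f (resAux B L g v) : L) : E × E) = _
      rw [resAux_coe, resAux_coe]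
    show ((resAux B L (f * g) v : L) : E × E) = ((resAux B L f * resAux B L g) v : E × E)
    rw [resAux_coe, h1]
    rfl

lemma resHom_apply (L : Submodule ℤ (E × E)) (f : bigIsom B L) (v : L) :
    ((resHom B L f v : L) : E × E) = f.1 (v : E × E) :=
  resAux_coe B L f v

lemma F1_mem (h : E ≃ₗ[ℤ] E) {L : Submodule ℤ (E × E)}
    (hL : L = LinearMap.graph (LinearMap.id : E →ₗ[ℤ] E) ⊔ LinearMap.graph h.toLinearMap)
    (hB : ∀ x y, B (h x) (h y) = B x y)
    (n : ℕ) (hn : 0 < n) (hord : orderOf h = n) (p) :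
    F1 h n hn hord p ∈ bigIsom B L := by
  refine ⟨fun v w => ?_, F1_map_eq h hL n hn hord p⟩
  show B ((h ^ (Multiplicative.toAdd p.1).val) v.1) ((h ^ (Multiplicative.toAdd p.1).val) w.1)
      + B ((h ^ (Multiplicative.toAdd p.2).val) v.2) ((h ^ (Multiplicative.toAdd p.2).val) w.2)
      = B v.1 w.1 + B v.2 w.2
  rw [B_pow B h hB, B_pow B h hB]

lemma F2_mem (h : E ≃ₗ[ℤ] E) {L : Submodule ℤ (E × E)}
    (hL : L = LinearMap.graph (LinearMap.id : E →ₗ[ℤ] E) ⊔ LinearMap.graph h.toLinearMap)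
    (g : Multiplicative (ZMod 2)) :
    F2 E g ∈ bigIsom B L := by
  by_cases hg : Multiplicative.toAdd g = 0
  · have e : F2 E g = 1 := if_pos hg
    rw [e]; exact (bigIsom B L).one_mem
  · have e : F2 E g = tM E := if_neg hg
    rw [e]
    refine ⟨fun v w => ?_, tM_map_eq h hL⟩
    show B (-v.2) (-w.2) + B (-v.1) (-w.1) = B v.1 w.1 + B v.2 w.2
    simp [add_comm]

lemma compat_big (h : E ≃ₗ[ℤ] E) (n : ℕ) (hn : 0 < n) (hord : orderOf h = n)
    (g : Multiplicative (ZMod 2)) (p) :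
    F1 h n hn hord ((swapHom (Multiplicative (ZMod n)) g) p)
      = F2 E g * F1 h n hn hord p * (F2 E g)⁻¹ := by
  by_cases hg : Multiplicative.toAdd g = 0
  · have h1 : (swapHom (Multiplicative (ZMod n)) g) p = p := by
      have e : swapHom (Multiplicative (ZMod n)) g = 1 := if_pos hg
      rw [e]; rfl
    have h2 : F2 E g = 1 := if_pos hg
    rw [h1, h2]
    group
  · have h1 : (swapHom (Multiplicative (ZMod n)) g) p = (p.2, p.1) := by
      have e : swapHom (Multiplicative (ZMod n)) g = MulEquiv.prodComm := if_neg hg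
      rw [e]; rfl
    have h2 : F2 E g = tM E := if_neg hg
    have h3 : (tM E)⁻¹ = tM E := inv_eq_of_mul_eq_one_right tM_mul_tM
    rw [h1, h2, h3]
    apply LinearEquiv.ext; intro v
    show ((h ^ (Multiplicative.toAdd p.2).val) v.1, (h ^ (Multiplicative.toAdd p.1).val) v.2)
        = (tM E) ((F1 h n hn hord p) ((tM E) v))
    show _ = (-((h ^ (Multiplicative.toAdd p.2).val) (-v.1)),
        -((h ^ (Multiplicative.toAdd p.1).val) (-v.2)))
    rw [map_neg, map_neg, neg_neg, neg_neg]

end Isom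

end SDCAux

/-- For a nonzero integral lattice `E` and `h ∈ O(E)` of finite order `n`,
with `L = M + N` the SDC lattice in `E ⊥ E` (where `M = {(x,x)}`, `N = {(x,hx)}`), there
is an injective group homomorphism `φ` from the wreath product
`(ℤ/n) ≀ (ℤ/2) = ((ℤ/n) × (ℤ/n)) ⋊ (ℤ/2)` (the nontrivial element of `ℤ/2` swapping the
factors) into the isometry group of `L`, such that `φ((a,b),0)` restricts
`(x,y) ↦ (hᵃx, hᵇy)`, `φ((0,0),1)` restricts `t_M : (x,y) ↦ (−y,−x)`, and `φ((−1,1),1)`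
restricts `t_N : (x,y) ↦ (−h⁻¹y, −hx)`. -/
theorem stmt_0 {E : Type*} [AddCommGroup E]
    [Module.Free ℤ E] [Module.Finite ℤ E] [Nontrivial E]
    (B : E →ₗ[ℤ] E →ₗ[ℤ] ℤ) (hsymm : ∀ x y, B x y = B y x)
    (h : E ≃ₗ[ℤ] E) (hB : ∀ x y, B (h x) (h y) = B x y)
    (n : ℕ) (hn : 0 < n) (hord : orderOf h = n)
    (L : Submodule ℤ (E × E))
    (hL : L = LinearMap.graph (LinearMap.id : E →ₗ[ℤ] E) ⊔ LinearMap.graph h.toLinearMap) :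
    ∃ φ : ((Multiplicative (ZMod n) × Multiplicative (ZMod n))
          ⋊[swapHom (Multiplicative (ZMod n))] Multiplicative (ZMod 2)) →*
        isomSubgroup (fun v w : E × E => B v.1 w.1 + B v.2 w.2) L,
      Function.Injective φ ∧
      (∀ (a b : ZMod n) (v : L),
        (((φ ⟨(Multiplicative.ofAdd a, Multiplicative.ofAdd b), 1⟩ : L ≃ₗ[ℤ] L) v : E × E)) =
          ((h ^ a.val) ((v : E × E).1), (h ^ b.val) ((v : E × E).2))) ∧
      (∀ v : L,
        (((φ ⟨1, Multiplicative.ofAdd 1⟩ : L ≃ₗ[ℤ] L) v : E × E)) =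
          (-(v : E × E).2, -(v : E × E).1)) ∧
      (∀ v : L,
        (((φ ⟨(Multiplicative.ofAdd (-1 : ZMod n), Multiplicative.ofAdd (1 : ZMod n)),
            Multiplicative.ofAdd 1⟩ : L ≃ₗ[ℤ] L) v : E × E)) =
          (-(h.symm (v : E × E).2), -(h ((v : E × E).1)))) := by
  classical
  haveI : NeZero n := ⟨hn.ne'⟩
  let f₁ : (Multiplicative (ZMod n) × Multiplicative (ZMod n)) →* SDCAux.bigIsom B L :=
    MonoidHom.codRestrict (SDCAux.F1 h n hn hord) _
      (fun p => SDCAux.F1_mem B h hL hB n hn hord p)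
  let f₂ : Multiplicative (ZMod 2) →* SDCAux.bigIsom B L :=
    MonoidHom.codRestrict (SDCAux.F2 E) _ (fun g => SDCAux.F2_mem B h hL g)
  have compat : ∀ g, f₁.comp ((swapHom (Multiplicative (ZMod n)) g)).toMonoidHom
      = (MulAut.conj (f₂ g)).toMonoidHom.comp f₁ := by
    intro g
    apply MonoidHom.ext; intro p
    apply Subtype.ext
    show SDCAux.F1 h n hn hord ((swapHom (Multiplicative (ZMod n)) g) p)
        = SDCAux.F2 E g * SDCAux.F1 h n hn hord p * (SDCAux.F2 E g)⁻¹
    exact SDCAux.compat_big h n hn hord g p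
  let ψ := SemidirectProduct.lift f₁ f₂ compat
  let φ0 := (SDCAux.resHom B L).comp ψ
  have hmem : ∀ z, φ0 z ∈ isomSubgroup (fun v w : E × E => B v.1 w.1 + B v.2 w.2) L := by
    intro z v w
    show B ((SDCAux.resHom B L (ψ z) v : E × E)).1 ((SDCAux.resHom B L (ψ z) w : E × E)).1
        + B ((SDCAux.resHom B L (ψ z) v : E × E)).2 ((SDCAux.resHom B L (ψ z) w : E × E)).2
        = B (v : E × E).1 (w : E × E).1 + B (v : E × E).2 (w : E × E).2
    rw [SDCAux.resHom_apply, SDCAux.resHom_apply]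
    exact (ψ z).2.1 (v : E × E) (w : E × E)
  have heval : ∀ z (v : L),
      ((MonoidHom.codRestrict φ0 _ hmem z : L ≃ₗ[ℤ] L) v : E × E)
      = (SDCAux.F1 h n hn hord z.left) ((SDCAux.F2 E z.right) (v : E × E)) := by
    intro z v
    show ((SDCAux.resHom B L (ψ z) v : L) : E × E) = _
    rw [SDCAux.resHom_apply]
    rfl
  refine ⟨MonoidHom.codRestrict φ0 _ hmem, ?_, ?_, ?_, ?_⟩
  · -- injectivity
    rw [injective_iff_map_eq_one]
    intro z hz
    obtain ⟨⟨a, b⟩, g⟩ := z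
    have hval : ∀ v : L, (SDCAux.F1 h n hn hord (a, b)) ((SDCAux.F2 E g) (v : E × E))
        = (v : E × E) := by
      intro v
      have h1 : (MonoidHom.codRestrict φ0 _ hmem ⟨(a, b), g⟩ : L ≃ₗ[ℤ] L) = 1 :=
        congrArg Subtype.val hz
      have h2 := heval ⟨(a, b), g⟩ v
      rw [h1] at h2
      exact h2.symm
    rcases (by decide : ∀ c : ZMod 2, c = 0 ∨ c = 1) (Multiplicative.toAdd g) with hg | hg
    · -- trivial flip
      have hF2 : SDCAux.F2 E g = 1 := if_pos hg
      have ha : ∀ x : E, (h ^ (Multiplicative.toAdd a).val) x = x := by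
        intro x
        have := hval ⟨(x, x), SDCAux.mem_M h hL x⟩
        rw [hF2] at this
        exact congrArg Prod.fst this
      have hb : ∀ x : E, (h ^ (Multiplicative.toAdd b).val) x = x := by
        intro x
        have := hval ⟨(x, x), SDCAux.mem_M h hL x⟩
        rw [hF2] at this
        exact congrArg Prod.snd this
      have haz : a = 1 := by
        have hA : h ^ (Multiplicative.toAdd a).val = 1 := LinearEquiv.ext ha
        have hdvd : n ∣ (Multiplicative.toAdd a).val := by
          have := orderOf_dvd_of_pow_eq_one hA
          rwa [hord] at this
        have h0 : (Multiplicative.toAdd a).val = 0 :=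
          Nat.eq_zero_of_dvd_of_lt hdvd (ZMod.val_lt _)
        exact toAdd_eq_zero.mp ((ZMod.val_eq_zero _).mp h0)
      have hbz : b = 1 := by
        have hA : h ^ (Multiplicative.toAdd b).val = 1 := LinearEquiv.ext hb
        have hdvd : n ∣ (Multiplicative.toAdd b).val := by
          have := orderOf_dvd_of_pow_eq_one hA
          rwa [hord] at this
        have h0 : (Multiplicative.toAdd b).val = 0 :=
          Nat.eq_zero_of_dvd_of_lt hdvd (ZMod.val_lt _)
        exact toAdd_eq_zero.mp ((ZMod.val_eq_zero _).mp h0)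
      have hgz : g = 1 := toAdd_eq_zero.mp hg
      rw [haz, hbz, hgz]
      rfl
    · -- nontrivial flip: contradiction
      exfalso
      have hF2 : SDCAux.F2 E g = SDCAux.tM E := if_neg (by rw [hg]; decide)
      have hM : ∀ x : E, (h ^ (Multiplicative.toAdd a).val) x = -x := by
        intro x
        have := hval ⟨(x, x), SDCAux.mem_M h hL x⟩
        rw [hF2] at this
        have h2 : (h ^ (Multiplicative.toAdd a).val) (-x) = x := congrArg Prod.fst this
        rw [map_neg] at h2
        exact neg_eq_iff_eq_neg.mp h2
      have hone : ∀ x : E, h x = x := by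
        intro x
        have := hval ⟨(x, h x), SDCAux.mem_N h hL x⟩
        rw [hF2] at this
        have h2 : (h ^ (Multiplicative.toAdd a).val) (-(h x)) = x := congrArg Prod.fst this
        rw [map_neg, hM (h x), neg_neg] at h2
        exact h2
      obtain ⟨u, hu⟩ := exists_ne (0 : E)
      have h3 : (h ^ (Multiplicative.toAdd a).val) u = u := by
        have he : h = 1 := LinearEquiv.ext hone
        rw [he, one_pow]
        rfl
      have h4 : u = -u := h3.symm.trans (hM u)
      have h5 : (2 : ℤ) • u = 0 := by
        rw [two_smul]
        exact neg_eq_iff_add_eq_zero.mp h4.symm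
      rcases smul_eq_zero.mp h5 with h6 | h6
      · norm_num at h6
      · exact hu h6
  · -- formula for ((a,b),0)
    intro a b v
    rw [heval]
    show (SDCAux.F1 h n hn hord (Multiplicative.ofAdd a, Multiplicative.ofAdd b))
        ((SDCAux.F2 E 1) (v : E × E)) = _
    rw [map_one]
    rfl
  · -- formula for t_M
    intro v
    rw [heval]
    have e2 : SDCAux.F2 E (Multiplicative.ofAdd 1) = SDCAux.tM E := if_neg (t := (1 : (E × E) ≃ₗ[ℤ] (E × E)))
      (by decide : ¬(Multiplicative.toAdd (Multiplicative.ofAdd (1 : ZMod 2)) = 0))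
    show (SDCAux.F1 h n hn hord 1) ((SDCAux.F2 E (Multiplicative.ofAdd 1)) (v : E × E)) = _
    rw [e2, map_one]
    rfl
  · -- formula for t_N
    intro v
    rw [heval]
    have key1 : h ^ (1 : ZMod n).val = h := by
      rcases lt_or_ge 1 n with h1n | h1n
      · haveI : Fact (1 < n) := ⟨h1n⟩
        rw [ZMod.val_one, pow_one]
      · have hn1 : n = 1 := le_antisymm h1n hn
        subst hn1
        have h1 : h = 1 := orderOf_eq_one_iff.mp hord
        rw [h1, one_pow]
    have key2 : h ^ ((-1 : ZMod n)).val = h.symm := by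
      have e0 : Multiplicative.ofAdd (-1 : ZMod n) * Multiplicative.ofAdd (1 : ZMod n) = 1 := by
        rw [← ofAdd_add]
        norm_num
      have e := map_mul (SDCAux.Pm h n hn hord) (Multiplicative.ofAdd (-1 : ZMod n))
        (Multiplicative.ofAdd (1 : ZMod n))
      rw [e0, map_one] at e
      have e2 : h ^ ((-1 : ZMod n)).val * h ^ ((1 : ZMod n)).val = 1 := e.symm
      rw [key1] at e2
      exact eq_inv_of_mul_eq_one_left e2
    have e2 : SDCAux.F2 E (Multiplicative.ofAdd 1) = SDCAux.tM E := if_neg (t := (1 : (E × E) ≃ₗ[ℤ] (E × E)))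
      (by decide : ¬(Multiplicative.toAdd (Multiplicative.ofAdd (1 : ZMod 2)) = 0))
    show (SDCAux.F1 h n hn hord
        (Multiplicative.ofAdd (-1 : ZMod n), Multiplicative.ofAdd (1 : ZMod n)))
        ((SDCAux.F2 E (Multiplicative.ofAdd 1)) (v : E × E)) = _
    rw [e2]
    show ((h ^ ((-1 : ZMod n)).val) (-(v : E × E).2),
        (h ^ ((1 : ZMod n)).val) (-(v : E × E).1)) = _
    rw [key1, key2, map_neg, map_neg]
end

section
/- Let E be an integral lattice and h ∈ O(E), and form L = M + N in E ⊥ E. Then for every v ∈ L one has 2v ∈ M + ann(M) and 2v ∈ N + ann(N); that is, M and N are RSSD sublattices of L. -/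
/-- For an integral lattice `E`, an isometry `h` of `E`, and `L = M + N` in
`E ⊥ E`, every `v ∈ L` satisfies `2v ∈ M + ann(M)` and `2v ∈ N + ann(N)`; that is,
`M` and `N` are RSSD sublattices of `L`. -/
theorem stmt_2 {E : Type*} [AddCommGroup E] [Module ℤ E]
    [Module.Free ℤ E] [Module.Finite ℤ E]
    (B : E →ₗ[ℤ] E →ₗ[ℤ] ℤ) (hsymm : ∀ x y, B x y = B y x)
    (h : E ≃ₗ[ℤ] E) (hB : ∀ x y, B (h x) (h y) = B x y)
    (B2 : E × E → E × E → ℤ)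
    (hB2 : ∀ v w, B2 v w = B v.1 w.1 + B v.2 w.2)
    (M N L : Set (E × E))
    (hM : M = {p | ∃ x : E, p = (x, x)})
    (hN : N = {p | ∃ x : E, p = (x, h x)})
    (hL : L = {p | ∃ m ∈ M, ∃ n ∈ N, p = m + n}) :
    ∀ v ∈ L,
      (∃ m ∈ M, ∃ a : E × E, (∀ q ∈ M, B2 a q = 0) ∧ (2 : ℤ) • v = m + a) ∧
      (∃ n ∈ N, ∃ a : E × E, (∀ q ∈ N, B2 a q = 0) ∧ (2 : ℤ) • v = n + a) := by
  intro v hv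
  rw [hL] at hv
  obtain ⟨m, hm, n, hn, rfl⟩ := hv
  rw [hM] at hm; rw [hN] at hn
  obtain ⟨x, rfl⟩ := hm
  obtain ⟨y, rfl⟩ := hn
  constructor
  · refine ⟨(2•x + y + h y, 2•x + y + h y), ?_, (y - h y, -(y - h y)), ?_, ?_⟩
    · rw [hM]; exact ⟨_, rfl⟩
    · intro q hq
      rw [hM] at hq
      obtain ⟨z, rfl⟩ := hq
      simp [hB2]
    · ext <;> simp [Prod.ext_iff] <;> abel
  · refine ⟨(x + h.symm x + 2•y, h (x + h.symm x + 2•y)),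
      ?_, (x - h.symm x, -(h (x - h.symm x))), ?_, ?_⟩
    · rw [hN]; exact ⟨_, rfl⟩
    · intro q hq
      rw [hN] at hq
      obtain ⟨z, rfl⟩ := hq
      simp only [hB2, map_neg, LinearMap.neg_apply, hB]
      ring
    · have hx : h (h.symm x) = x := h.apply_symm_apply x
      ext <;> simp [Prod.ext_iff, hx] <;> abel
end

section
/- Let E be an integral lattice, h ∈ O(E), and L = M + N ⊆ E ⊥ E. Then for a ∈ E one has (a,0) ∈ L if and only if a ∈ (h−1)E, and (0,a) ∈ L if and only if a ∈ (h−1)E; that is, L ∩ (E × 0) = (h−1)E × 0 and L ∩ (0 × E) = 0 × (h−1)E. -/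
/-- For an integral lattice `E`, an isometry `h` of `E`, and
`L = M + N ⊆ E ⊥ E` with `M = {(x,x)}`, `N = {(x,hx)}`, one has
`L ∩ (E × 0) = (h−1)E × 0` and `L ∩ (0 × E) = 0 × (h−1)E`. -/
theorem stmt_3 {E : Type*} [AddCommGroup E] [Module ℤ E]
    [Module.Free ℤ E] [Module.Finite ℤ E]
    (B : E →ₗ[ℤ] E →ₗ[ℤ] ℤ) (hsymm : ∀ x y, B x y = B y x)
    (h : E ≃ₗ[ℤ] E) (hB : ∀ x y, B (h x) (h y) = B x y)
    (M N L : Set (E × E))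
    (hM : M = {p | ∃ x : E, p = (x, x)})
    (hN : N = {p | ∃ x : E, p = (x, h x)})
    (hL : L = {p | ∃ m ∈ M, ∃ n ∈ N, p = m + n}) :
    ∀ a : E,
      (((a, (0 : E)) ∈ L) ↔ (∃ x : E, h x - x = a)) ∧
      ((((0 : E), a) ∈ L) ↔ (∃ x : E, h x - x = a)) := by
  subst hM hN hL
  intro a
  constructor
  · constructor
    · rintro ⟨m, ⟨u, rfl⟩, n, ⟨v, rfl⟩, hp⟩
      rw [Prod.ext_iff] at hp
      obtain ⟨h1, h2⟩ := hp
      simp only [Prod.fst_add, Prod.snd_add] at h1 h2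
      refine ⟨-v, ?_⟩
      rw [map_neg]
      have hu : u = -h v := by rw [eq_neg_iff_add_eq_zero]; exact h2.symm
      rw [hu] at h1
      rw [h1]; abel
    · rintro ⟨x, rfl⟩
      exact ⟨(h x, h x), ⟨h x, rfl⟩, (-x, -(h x)), ⟨-x, by rw [map_neg]⟩,
        by simp [Prod.ext_iff]; abel⟩
  · constructor
    · rintro ⟨m, ⟨u, rfl⟩, n, ⟨v, rfl⟩, hp⟩
      rw [Prod.ext_iff] at hp
      obtain ⟨h1, h2⟩ := hp
      simp only [Prod.fst_add, Prod.snd_add] at h1 h2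
      refine ⟨v, ?_⟩
      have hu : u = -v := by rw [eq_neg_iff_add_eq_zero]; exact h1.symm
      rw [hu] at h2
      rw [h2]; abel
    · rintro ⟨x, rfl⟩
      exact ⟨(-x, -x), ⟨-x, rfl⟩, (x, h x), ⟨x, rfl⟩,
        by simp [Prod.ext_iff]; abel⟩
end

section
/- Let E be an integral lattice, h ∈ O(E), and L = M + N ⊆ E ⊥ E. Then each of the four isometries of E ⊥ E given by t_M : (x,y) ↦ (−y,−x), t_N : (x,y) ↦ (−h⁻¹y,−hx), β : (x,y) ↦ (hx,y), and γ : (x,y) ↦ (x,hy) maps L bijectively onto L. -/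
/-- For an integral lattice `E`, an isometry `h` of `E`, and
`L = M + N ⊆ E ⊥ E`, each of the four isometries `t_M : (x,y) ↦ (−y,−x)`,
`t_N : (x,y) ↦ (−h⁻¹y,−hx)`, `β : (x,y) ↦ (hx,y)`, `γ : (x,y) ↦ (x,hy)` of `E ⊥ E`
maps `L` bijectively onto `L`. -/
theorem stmt_4 {E : Type*} [AddCommGroup E] [Module ℤ E]
    [Module.Free ℤ E] [Module.Finite ℤ E]
    (B : E →ₗ[ℤ] E →ₗ[ℤ] ℤ) (hsymm : ∀ x y, B x y = B y x)
    (h : E ≃ₗ[ℤ] E) (hB : ∀ x y, B (h x) (h y) = B x y)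
    (M N L : Set (E × E))
    (hM : M = {p | ∃ x : E, p = (x, x)})
    (hN : N = {p | ∃ x : E, p = (x, h x)})
    (hL : L = {p | ∃ m ∈ M, ∃ n ∈ N, p = m + n})
    (tM tN β γ : E × E → E × E)
    (htM : ∀ p, tM p = (-p.2, -p.1))
    (htN : ∀ p, tN p = (-(h.symm p.2), -(h p.1)))
    (hβ : ∀ p, β p = (h p.1, p.2))
    (hγ : ∀ p, γ p = (p.1, h p.2)) :
    Set.BijOn tM L L ∧ Set.BijOn tN L L ∧ Set.BijOn β L L ∧ Set.BijOn γ L L := by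
  have key : ∀ p : E × E, p ∈ L ↔ ∃ a b : E, p = (a + b, a + h b) := by
    intro p
    subst hL hM hN
    constructor
    · rintro ⟨m, ⟨a, rfl⟩, n, ⟨b, rfl⟩, rfl⟩
      exact ⟨a, b, rfl⟩
    · rintro ⟨a, b, rfl⟩
      exact ⟨(a, a), ⟨a, rfl⟩, (b, h b), ⟨b, rfl⟩, rfl⟩
  -- maps-to lemmas
  have mtM : Set.MapsTo tM L L := by
    intro p hp
    rw [key] at hp ⊢
    obtain ⟨a, b, rfl⟩ := hp
    refine ⟨-a - b - h b, b, ?_⟩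
    rw [htM]
    ext <;> simp <;> abel
  have mtN : Set.MapsTo tN L L := by
    intro p hp
    rw [key] at hp ⊢
    obtain ⟨a, b, rfl⟩ := hp
    refine ⟨a, -(h.symm a) - a - b, ?_⟩
    rw [htN]
    ext <;> simp <;> abel
  have mβ : Set.MapsTo β L L := by
    intro p hp
    rw [key] at hp ⊢
    obtain ⟨a, b, rfl⟩ := hp
    refine ⟨h a + h b + a, -a, ?_⟩
    rw [hβ]
    ext <;> simp <;> abel
  have mβ' : ∀ q ∈ L, (h.symm q.1, q.2) ∈ L := by
    intro q hq
    rw [key] at hq ⊢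
    obtain ⟨a, b, rfl⟩ := hq
    refine ⟨-b, h.symm a + h.symm b + b, ?_⟩
    ext <;> simp <;> abel
  have mγ : Set.MapsTo γ L L := by
    intro p hp
    rw [key] at hp ⊢
    obtain ⟨a, b, rfl⟩ := hp
    refine ⟨-(h b), a + h b + b, ?_⟩
    rw [hγ]
    ext <;> simp <;> abel
  have mγ' : ∀ q ∈ L, (q.1, h.symm q.2) ∈ L := by
    intro q hq
    rw [key] at hq ⊢
    obtain ⟨a, b, rfl⟩ := hq
    refine ⟨a + b + h.symm a, -(h.symm a), ?_⟩
    ext <;> simp <;> abel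
  have tMinv : ∀ p, tM (tM p) = p := by
    intro p; rw [htM, htM]; simp
  have tNinv : ∀ p, tN (tN p) = p := by
    intro p; rw [htN, htN]; simp
  refine ⟨⟨mtM, ?_, ?_⟩, ⟨mtN, ?_, ?_⟩, ⟨mβ, ?_, ?_⟩, ⟨mγ, ?_, ?_⟩⟩
  · intro p _ q _ hpq
    have := congrArg tM hpq
    rwa [tMinv, tMinv] at this
  · intro q hq
    exact ⟨tM q, mtM hq, tMinv q⟩
  · intro p _ q _ hpq
    have := congrArg tN hpq
    rwa [tNinv, tNinv] at this
  · intro q hq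
    exact ⟨tN q, mtN hq, tNinv q⟩
  · intro p _ q _ hpq
    rw [hβ, hβ, Prod.mk.injEq] at hpq
    exact Prod.ext (h.injective hpq.1) hpq.2
  · intro q hq
    refine ⟨(h.symm q.1, q.2), mβ' q hq, ?_⟩
    rw [hβ]; simp
  · intro p _ q _ hpq
    rw [hγ, hγ, Prod.mk.injEq] at hpq
    exact Prod.ext hpq.1 (h.injective hpq.2)
  · intro q hq
    refine ⟨(q.1, h.symm q.2), mγ' q hq, ?_⟩
    rw [hγ]; simp
end

section
/- Let E be an even positive definite integral lattice (⟨x,x⟩ ∈ 2ℤ for all x ∈ E and ⟨x,x⟩ > 0 for all x ≠ 0) and let h ∈ O(E). Then the lattice L = M + N ⊆ E ⊥ E contains no roots if and only if h is rootless, i.e., (h−1)E contains no roots. -/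
/-- For an even positive definite integral lattice `E` and `h ∈ O(E)`, the
lattice `L = M + N ⊆ E ⊥ E` contains no roots if and only if `h` is rootless, i.e.
`(h−1)E` contains no roots. -/
theorem stmt_6 {E : Type*} [AddCommGroup E] [Module ℤ E]
    [Module.Free ℤ E] [Module.Finite ℤ E]
    (B : E →ₗ[ℤ] E →ₗ[ℤ] ℤ) (hsymm : ∀ x y, B x y = B y x)
    (heven : ∀ x : E, (2 : ℤ) ∣ B x x)
    (hpos : ∀ x : E, x ≠ 0 → 0 < B x x)
    (h : E ≃ₗ[ℤ] E) (hB : ∀ x y, B (h x) (h y) = B x y)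
    (B2 : E × E → E × E → ℤ)
    (hB2 : ∀ v w, B2 v w = B v.1 w.1 + B v.2 w.2)
    (M N L : Set (E × E))
    (hM : M = {p | ∃ x : E, p = (x, x)})
    (hN : N = {p | ∃ x : E, p = (x, h x)})
    (hL : L = {p | ∃ m ∈ M, ∃ n ∈ N, p = m + n}) :
    (∀ v ∈ L, B2 v v ≠ 2) ↔ (∀ x : E, B (h x - x) (h x - x) ≠ 2) := by
  have hnonneg : ∀ x : E, 0 ≤ B x x := by
    intro x
    by_cases hx : x = 0
    · simp [hx]
    · exact le_of_lt (hpos x hx)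
  have hzero : ∀ x : E, B x x = 0 → x = 0 := by
    intro x hx
    by_contra hx0
    exact absurd hx (ne_of_gt (hpos x hx0))
  constructor
  · intro hv x hx2
    have hmem : ((-x, -x) + (x, h x) : E × E) ∈ L := by
      rw [hL]
      exact ⟨(-x, -x), by rw [hM]; exact ⟨-x, rfl⟩, (x, h x), by rw [hN]; exact ⟨x, rfl⟩, rfl⟩
    apply hv _ hmem
    have : ((-x, -x) + (x, h x) : E × E) = (0, h x - x) := by
      simp [Prod.ext_iff]; abel
    rw [this, hB2]
    simpa using hx2
  · intro hr v hvL heq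
    rw [hL] at hvL
    obtain ⟨m, hm, n, hn, rfl⟩ := hvL
    rw [hM] at hm; rw [hN] at hn
    obtain ⟨x, rfl⟩ := hm
    obtain ⟨y, rfl⟩ := hn
    rw [hB2] at heq
    simp only [Prod.fst_add, Prod.snd_add] at heq
    set a := x + y with ha
    set b := x + h y with hb
    have haa := hnonneg a
    have hbb := hnonneg b
    obtain ⟨p, hp⟩ := heven a
    obtain ⟨q, hq⟩ := heven b
    have hcase : (B a a = 0 ∧ B b b = 2) ∨ (B a a = 2 ∧ B b b = 0) := by omega
    rcases hcase with ⟨h0, h2⟩ | ⟨h2, h0⟩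
    · have ha0 : a = 0 := hzero a h0
      have hxy : x = -y := by
        have := ha0; rw [ha] at this
        linear_combination (norm := abel) this
      have : b = h y - y := by rw [hb, hxy]; abel
      rw [this] at h2
      exact hr y h2
    · have hb0 : b = 0 := hzero b h0
      have hxy : x = -(h y) := by
        have := hb0; rw [hb] at this
        linear_combination (norm := abel) this
      have : a = -(h y - y) := by rw [ha, hxy]; abel
      rw [this] at h2
      simp only [map_neg, LinearMap.neg_apply, neg_neg] at h2
      exact hr y h2
end

section
/- Let E be an integral lattice that contains a root, let h ∈ O(E), let p and q be distinct primes, and suppose g = hˢ and k = hᵗ are powers of h such that g has order a positive power of p, k has order a positive power of q, and both g − 1 and k − 1 are injective on E (i.e., g and k have no nonzero fixed vectors). Then h is not rootless. -/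
/-- Let `E` be an integral lattice containing a root, `h ∈ O(E)`, and let
`p ≠ q` be primes. Suppose `g = hˢ` and `k = hᵗ` are powers of `h` such that `g` has order
a positive power of `p`, `k` has order a positive power of `q`, and both `g − 1` and
`k − 1` are injective on `E` (no nonzero fixed vectors). Then `h` is not rootless:
`(h−1)E` contains a root. -/
theorem stmt_8 {E : Type*} [AddCommGroup E] [Module ℤ E]
    [Module.Free ℤ E] [Module.Finite ℤ E]
    (B : E →ₗ[ℤ] E →ₗ[ℤ] ℤ) (hsymm : ∀ x y, B x y = B y x)
    (hroot : ∃ r : E, B r r = 2)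
    (h : E ≃ₗ[ℤ] E) (hB : ∀ x y, B (h x) (h y) = B x y)
    (p q : ℕ) (hp : p.Prime) (hq : q.Prime) (hpq : p ≠ q)
    (s t : ℕ) (a b : ℕ) (ha : 1 ≤ a) (hb : 1 ≤ b)
    (hordg : orderOf (h ^ s) = p ^ a)
    (hordk : orderOf (h ^ t) = q ^ b)
    (hgfpf : ∀ x : E, (h ^ s) x = x → x = 0)
    (hkfpf : ∀ x : E, (h ^ t) x = x → x = 0) :
    ∃ x : E, B (h x - x) (h x - x) = 2 := by
  obtain ⟨r, hr⟩ := hroot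
  set f : E →ₗ[ℤ] E := h.toLinearMap - LinearMap.id with hf
  have hfx : ∀ x : E, f x = h x - x := fun x => rfl
  -- range f is stable under h
  have hstep : ∀ y ∈ LinearMap.range f, h y ∈ LinearMap.range f := by
    rintro y ⟨x, rfl⟩
    refine ⟨h x, ?_⟩
    simp [hfx]
  have hpowmem : ∀ (i : ℕ) (y : E), y ∈ LinearMap.range f → (h ^ i) y ∈ LinearMap.range f := by
    intro i
    induction i with
    | zero => intro y hy; simpa using hy
    | succ n ih =>
      intro y hy
      have : (h ^ (n + 1)) y = h ((h ^ n) y) := by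
        rw [LinearEquiv.pow_apply, LinearEquiv.pow_apply, Function.iterate_succ_apply']
      rw [this]
      exact hstep _ (ih y hy)
  -- x - h^i x ∈ range f for all i
  have hclosed : ∀ (i : ℕ) (x : E), x - (h ^ i) x ∈ LinearMap.range f := by
    intro i
    induction i with
    | zero => intro x; simp
    | succ n ih =>
      intro x
      have h1 : x - (h ^ (n + 1)) x = (x - (h ^ n) x) + (h ^ n) (x - h x) := by
        rw [map_sub]
        have : (h ^ (n + 1)) x = (h ^ n) (h x) := by
          rw [LinearEquiv.pow_apply, LinearEquiv.pow_apply, Function.iterate_succ_apply]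
        rw [this]; abel
      rw [h1]
      refine add_mem (ih x) (hpowmem n _ ?_)
      have : x - h x = -(f x) := by rw [hfx]; abel
      rw [this]
      exact neg_mem (LinearMap.mem_range_self f x)
  -- general lemma : for g of order n with no fixed points, n • x ∈ range f
  have key : ∀ (g : E ≃ₗ[ℤ] E) (n : ℕ), g ^ n = 1 → (∀ x : E, g x = x → x = 0) →
      (∀ (i : ℕ) (x : E), x - (g ^ i) x ∈ LinearMap.range f) →
      ∀ x : E, (n : ℤ) • x ∈ LinearMap.range f := by
    intro g n hgn hfpf hcl x
    set S : E := ∑ i ∈ Finset.range n, (g ^ i) x with hS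
    have hSfix : g S = S := by
      have h1 : g S = ∑ i ∈ Finset.range n, (g ^ (i + 1)) x := by
        rw [hS, map_sum]
        refine Finset.sum_congr rfl fun i _ => ?_
        rw [LinearEquiv.pow_apply, LinearEquiv.pow_apply, Function.iterate_succ_apply']
      have h2 : ∑ i ∈ Finset.range n, (g ^ (i + 1)) x
          = (∑ i ∈ Finset.range n, (g ^ i) x) + (g ^ n) x - (g ^ 0) x := by
        have h4 := Finset.sum_range_succ (fun i => (g ^ i) x) n
        have h3 := Finset.sum_range_succ' (fun i => (g ^ i) x) n
        rw [h4] at h3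
        rw [eq_sub_iff_add_eq]
        exact h3.symm
      rw [h1, h2, hgn]
      simp
      exact hS.symm
    have hS0 : S = 0 := hfpf S hSfix
    have hsum : (n : ℤ) • x = ∑ i ∈ Finset.range n, (x - (g ^ i) x) := by
      rw [natCast_zsmul, Finset.sum_sub_distrib, ← hS, hS0, Finset.sum_const,
        Finset.card_range, sub_zero]
    rw [hsum]
    exact Submodule.sum_mem _ fun i _ => hcl i x
  have hgn : (h ^ s) ^ (p ^ a) = 1 := by rw [← hordg]; exact pow_orderOf_eq_one _
  have hkn : (h ^ t) ^ (q ^ b) = 1 := by rw [← hordk]; exact pow_orderOf_eq_one _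
  have hpa : ((p : ℤ) ^ a) • r ∈ LinearMap.range f := by
    rw [← Nat.cast_pow]
    exact key (h ^ s) (p ^ a) hgn hgfpf
      (fun i x => by rw [← pow_mul]; exact hclosed (s * i) x) r
  have hqb : ((q : ℤ) ^ b) • r ∈ LinearMap.range f := by
    rw [← Nat.cast_pow]
    exact key (h ^ t) (q ^ b) hkn hkfpf
      (fun i x => by rw [← pow_mul]; exact hclosed (t * i) x) r
  -- coprimality and Bezout
  have hcop : IsCoprime ((p : ℤ) ^ a) ((q : ℤ) ^ b) := by
    refine IsCoprime.pow ?_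
    rw [Int.isCoprime_iff_gcd_eq_one]
    exact_mod_cast (Nat.coprime_primes hp hq).mpr hpq
  obtain ⟨u, v, huv⟩ := hcop
  have hmem : (u * (p : ℤ) ^ a + v * (q : ℤ) ^ b) • r ∈ LinearMap.range f := by
    rw [add_zsmul, mul_zsmul, mul_zsmul]
    exact add_mem (zsmul_mem hpa u) (zsmul_mem hqb v)
  rw [huv, one_zsmul] at hmem
  obtain ⟨x, hx⟩ := hmem
  refine ⟨x, ?_⟩
  rw [hfx] at hx
  rw [hx, hr]
end

section
/- For every n ≥ 1, the sublattice (h_{A_n} − 1)A_n of A_n contains no roots, i.e., no vector of the form (h_{A_n} − 1)α with α ∈ A_n has norm 2 under the standard inner product. -/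
/-- An integer vector with sum `0` and sum of squares `2` is `e_j - e_k` with `j ≠ k`. -/
lemma root_classify {N : ℕ} (β : Fin N → ℤ) (h0 : ∑ i, β i = 0)
    (h2 : ∑ i, β i * β i = 2) :
    ∃ j k : Fin N, j ≠ k ∧
      ∀ i, β i = (if i = j then 1 else 0) - (if i = k then 1 else 0) := by
  have hb : ∀ i, β i = -1 ∨ β i = 0 ∨ β i = 1 := by
    intro i
    have h := Finset.single_le_sum (f := fun j => β j * β j)
      (fun j _ => mul_self_nonneg (β j)) (Finset.mem_univ i)
    rw [h2] at h
    have h' : β i * β i ≤ 2 := h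
    have h1 : -1 ≤ β i := by nlinarith [sq_nonneg (β i + 1)]
    have h2' : β i ≤ 1 := by nlinarith [sq_nonneg (β i - 1)]
    omega
  set P := Finset.univ.filter (fun i => β i = 1) with hPdef
  set Q := Finset.univ.filter (fun i => β i = -1) with hQdef
  have hsq : ∀ i, β i * β i =
      (if β i = 1 then (1:ℤ) else 0) + (if β i = -1 then 1 else 0) := by
    intro i; rcases hb i with h | h | h <;> simp [h]
  have hlin : ∀ i, β i =
      (if β i = 1 then (1:ℤ) else 0) - (if β i = -1 then 1 else 0) := by
    intro i; rcases hb i with h | h | h <;> simp [h]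
  have e2 : (P.card : ℤ) + (Q.card : ℤ) = 2 := by
    have key : ∑ i, ((if β i = 1 then (1:ℤ) else 0) + if β i = -1 then 1 else 0) = 2 :=
      (Finset.sum_congr rfl fun i _ => (hsq i).symm).trans h2
    rw [Finset.sum_add_distrib, Finset.sum_boole, Finset.sum_boole] at key
    simpa [hPdef, hQdef] using key
  have e0 : (P.card : ℤ) - (Q.card : ℤ) = 0 := by
    have key : ∑ i, ((if β i = 1 then (1:ℤ) else 0) - if β i = -1 then 1 else 0) = 0 :=
      (Finset.sum_congr rfl fun i _ => (hlin i).symm).trans h0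
    rw [Finset.sum_sub_distrib, Finset.sum_boole, Finset.sum_boole] at key
    simpa [hPdef, hQdef] using key
  have hP1 : P.card = 1 := by omega
  have hQ1 : Q.card = 1 := by omega
  obtain ⟨j, hj⟩ := Finset.card_eq_one.mp hP1
  obtain ⟨k, hk⟩ := Finset.card_eq_one.mp hQ1
  have hβj : β j = 1 := by
    have : j ∈ P := hj ▸ Finset.mem_singleton_self j
    simpa [hPdef] using this
  have hβk : β k = -1 := by
    have : k ∈ Q := hk ▸ Finset.mem_singleton_self k
    simpa [hQdef] using this
  have hjk : j ≠ k := fun h => by rw [h, hβk] at hβj; omega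
  refine ⟨j, k, hjk, fun i => ?_⟩
  rcases hb i with h | h | h
  · have hik : i = k := by
      have : i ∈ Q := by simp [hQdef, h]
      simpa [hk] using this
    subst hik
    simp [h, hjk, Ne.symm hjk]
  · have hij : i ≠ j := fun hij => by rw [hij, hβj] at h; omega
    have hik : i ≠ k := fun hik => by rw [hik, hβk] at h; omega
    simp [hij, hik, h]
  · have hij : i = j := by
      have : i ∈ P := by simp [hPdef, h]
      simpa [hj] using this
    subst hij
    simp [h, hjk]

/-- For every `n ≥ 1`, the sublattice `(h_{A_n} − 1)A_n` of the root lattice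
`A_n = {x ∈ ℤ^{n+1} : Σ xᵢ = 0}` contains no roots: no vector `(h_{A_n} − 1)α` with
`α ∈ A_n` has norm `2`, where `h_{A_n}` cyclically shifts the coordinates. -/
theorem stmt_9 (n : ℕ) (hn : 1 ≤ n) :
    ¬ ∃ α : Fin (n + 1) → ℤ, (∑ i, α i) = 0 ∧
      (∑ i, (α (i + 1) - α i) * (α (i + 1) - α i)) = 2 := by
  rintro ⟨α, hsum, hnorm⟩
  set β : Fin (n + 1) → ℤ := fun i => α (i + 1) - α i with hβdef
  have hshift : ∑ i, α (i + 1) = ∑ i, α i :=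
    Fintype.sum_equiv (Equiv.addRight 1) _ _ (fun i => rfl)
  have h0 : ∑ i, β i = 0 := by
    rw [hβdef]
    rw [Finset.sum_sub_distrib, hshift, hsum]
    ring
  obtain ⟨j, k, hjk, hβ⟩ := root_classify β h0 hnorm
  -- Compute S = ∑ i, i * β i two ways.
  have hS1 : ∑ i : Fin (n + 1), (i.val : ℤ) * β i = (j.val : ℤ) - (k.val : ℤ) := by
    have : ∀ i : Fin (n + 1), (i.val : ℤ) * β i =
        (if i = j then (i.val : ℤ) else 0) - (if i = k then (i.val : ℤ) else 0) := by
      intro i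
      rw [hβ i]
      split_ifs <;> ring
    rw [Finset.sum_congr rfl fun i _ => this i, Finset.sum_sub_distrib]
    simp
  have hreindex : ∑ i : Fin (n + 1), (i.val : ℤ) * α i =
      ∑ i : Fin (n + 1), (((i + 1 : Fin (n + 1)).val : ℤ)) * α (i + 1) :=
    (Fintype.sum_equiv (Equiv.addRight 1) _ _ (fun i => rfl)).symm
  have hS2 : ∑ i : Fin (n + 1), (i.val : ℤ) * β i = ((n : ℤ) + 1) * α 0 := by
    rw [hβdef]
    simp only [mul_sub]
    rw [Finset.sum_sub_distrib, hreindex, ← Finset.sum_sub_distrib]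
    have key : ∀ i : Fin (n + 1),
        (i.val : ℤ) * α (i + 1) - ((i + 1 : Fin (n + 1)).val : ℤ) * α (i + 1) =
        (-1) * α (i + 1) + (if i = Fin.last n then ((n : ℤ) + 1) * α (i + 1) else 0) := by
      intro i
      rw [Fin.val_add_one]
      by_cases h : i = Fin.last n
      · simp only [h, if_pos, if_pos rfl]
        simp [Fin.val_last]
        ring
      · simp only [if_neg h]
        push_cast
        ring
    rw [Finset.sum_congr rfl fun i _ => key i, Finset.sum_add_distrib]
    rw [Finset.sum_ite_eq' Finset.univ (Fin.last n)
      (fun i => ((n : ℤ) + 1) * α (i + 1))]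
    simp [hshift, hsum, Fin.last_add_one]
  rw [hS1] at hS2
  have hjle : (j.val : ℤ) ≤ n := by exact_mod_cast Nat.lt_succ_iff.mp j.isLt
  have hkle : (k.val : ℤ) ≤ n := by exact_mod_cast Nat.lt_succ_iff.mp k.isLt
  have hjpos : (0 : ℤ) ≤ j.val := Int.ofNat_nonneg _
  have hkpos : (0 : ℤ) ≤ k.val := Int.ofNat_nonneg _
  have hne : (j.val : ℤ) ≠ (k.val : ℤ) := by
    intro h
    exact hjk (Fin.val_injective (by exact_mod_cast h))
  rcases lt_trichotomy (α 0) 0 with h | h | h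
  · have : α 0 ≤ -1 := by omega
    nlinarith
  · rw [h, mul_zero] at hS2; omega
  · have : 1 ≤ α 0 := by omega
    nlinarith
end

section
/- For every n ≥ 1, the image of the dual lattice A_n* under h_{A_n} − 1 equals A_n; here A_n* = {v ∈ ℚ^{n+1} : Σᵢ vᵢ = 0 and ⟨v,a⟩ ∈ ℤ for all a ∈ A_n}, where h_{A_n} acts on ℚ^{n+1} by cyclically shifting coordinates. -/
/-- For every `n ≥ 1`, the image of the dual lattice
`A_n* = {v ∈ ℚ^{n+1} : Σ vᵢ = 0 and ⟨v,a⟩ ∈ ℤ for all a ∈ A_n}` under `h_{A_n} − 1`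
equals `A_n` (viewed inside `ℚ^{n+1}`), where `h_{A_n}` cyclically shifts coordinates. -/
theorem stmt_10 (n : ℕ) (hn : 1 ≤ n) :
    {w : Fin (n + 1) → ℚ | ∃ v : Fin (n + 1) → ℚ,
        ((∑ i, v i) = 0 ∧
          ∀ a : Fin (n + 1) → ℤ, (∑ i, a i) = 0 → ∃ z : ℤ, (∑ i, v i * (a i : ℚ)) = z) ∧
        w = fun i => v (i + 1) - v i} =
      {w : Fin (n + 1) → ℚ | (∀ i, ∃ z : ℤ, w i = z) ∧ (∑ i, w i) = 0} := by
  ext w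
  simp only [Set.mem_setOf_eq]
  constructor
  · rintro ⟨v, ⟨hsum, hdual⟩, rfl⟩
    constructor
    · intro i
      obtain ⟨zz, hzz⟩ := hdual
        (fun j => (if j = i + 1 then 1 else 0) - (if j = i then 1 else 0)) (by simp)
      refine ⟨zz, ?_⟩
      rw [← hzz]
      have : ∀ j : Fin (n+1),
          v j * (((if j = i + 1 then (1:ℤ) else 0) - (if j = i then 1 else 0) : ℤ) : ℚ)
          = (if j = i + 1 then v j else 0) - (if j = i then v j else 0) := by
        intro j; push_cast; split_ifs <;> ring
      rw [Finset.sum_congr rfl fun j _ => this j, Finset.sum_sub_distrib]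
      simp
    · rw [Finset.sum_sub_distrib,
        Fintype.sum_equiv (Equiv.addRight (1 : Fin (n+1))) (fun i => v (i + 1)) v
          (fun i => rfl), sub_self]
  · rintro ⟨hint, hsum⟩
    choose z hz using hint
    have hzsum : (∑ i, z i) = 0 := by
      have : ((∑ i, z i : ℤ) : ℚ) = 0 := by
        push_cast
        rw [← hsum]
        exact Finset.sum_congr rfl fun i _ => (hz i).symm
      exact_mod_cast this
    letI : NatCast (Fin (n + 1)) := (Fin.instAddMonoidWithOne (n + 1)).toNatCast
    set M : ℕ → ℤ := fun t => ∑ k ∈ Finset.range t, z k with hM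
    have hMn1 : M (n + 1) = 0 := by
      rw [hM]
      simp only
      rw [← Fin.sum_univ_eq_sum_range (fun k => z k) (n+1)]
      rw [← hzsum]
      exact Finset.sum_congr rfl fun i _ => by rw [Fin.cast_val_eq_self]
    set m : Fin (n + 1) → ℤ := fun j => M j.val with hm
    have key : ∀ i : Fin (n + 1), m (i + 1) - m i = z i := by
      intro i
      rcases lt_or_eq_of_le (Nat.lt_succ_iff.mp i.isLt) with h | h
      · have hv : (i + 1).val = i.val + 1 := Fin.val_add_one_of_lt (by
          rw [Fin.lt_iff_val_lt_val, Fin.val_last]; exact h)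
        rw [hm]
        simp only [hv, hM, Finset.sum_range_succ, Fin.cast_val_eq_self]
        ring
      · have hi : i = Fin.last n := by
          apply Fin.ext; rw [Fin.val_last, h]
        have h1 : i + 1 = 0 := by
          rw [hi]; exact Fin.last_add_one n
        have h2 : M (n + 1) = M n + z i := by
          rw [hM]; simp only [Finset.sum_range_succ]
          congr 1
          rw [hi]; congr 1
          apply Fin.ext; simp [Fin.val_last]
        have h0 : m (i + 1) = 0 := by rw [h1]; simp [hm, hM]
        have h3 : m i = - z i := by
          show M (i : ℕ) = - z i
          rw [h]; omega
        rw [h0, h3]; ring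
    set S : ℤ := ∑ j, m j with hS
    set c : ℚ := -(S : ℚ) / (n + 1) with hc
    refine ⟨fun j => c + (m j : ℚ), ⟨?_, ?_⟩, ?_⟩
    · rw [Finset.sum_add_distrib, Finset.sum_const, Finset.card_univ, Fintype.card_fin]
      have : (∑ j, (m j : ℚ)) = (S : ℚ) := by rw [hS]; push_cast; ring
      rw [this, hc]
      have hne : ((n : ℚ) + 1) ≠ 0 := by positivity
      field_simp
      ring_nf
      field_simp
      ring
    · intro a ha
      refine ⟨∑ j, m j * a j, ?_⟩
      have : ∀ j : Fin (n+1), (c + (m j : ℚ)) * (a j : ℚ)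
          = c * (a j : ℚ) + ((m j * a j : ℤ) : ℚ) := by
        intro j; push_cast; ring
      rw [Finset.sum_congr rfl fun j _ => this j, Finset.sum_add_distrib,
        ← Finset.mul_sum]
      have : (∑ j, (a j : ℚ)) = 0 := by exact_mod_cast ha
      rw [this, mul_zero, zero_add]
      push_cast; ring
    · funext i
      have : c + (m (i+1) : ℚ) - (c + (m i : ℚ)) = ((m (i+1) - m i : ℤ) : ℚ) := by
        push_cast; ring
      rw [hz i]
      simp only
      rw [this, key i]
end

section
/- There is no rootless element of order 7 in O(E8): every h ∈ O(E8) with h of order 7 satisfies that (h−1)E8 contains a vector of norm 2. -/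
/-- The `E₈` lattice as a `ℤ`-submodule of `ℚ⁸`: vectors whose coordinates are either all
integers or all in `ℤ + 1/2`, with even coordinate sum. -/
def E8Lat : Submodule ℤ (Fin 8 → ℚ) where
  carrier := {x | ((∀ i, ∃ z : ℤ, x i = z) ∨ (∀ i, ∃ z : ℤ, x i = z + 1/2)) ∧
    ∃ k : ℤ, (∑ i, x i) = 2 * k}
  add_mem' := by
    rintro a b ⟨ha, ka, hka⟩ ⟨hb, kb, hkb⟩
    refine ⟨?_, ka + kb, ?_⟩
    · rcases ha with ha | ha <;> rcases hb with hb | hb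
      · left; intro i
        obtain ⟨z, hz⟩ := ha i; obtain ⟨w, hw⟩ := hb i
        exact ⟨z + w, by simp only [Pi.add_apply, hz, hw]; push_cast; ring⟩
      · right; intro i
        obtain ⟨z, hz⟩ := ha i; obtain ⟨w, hw⟩ := hb i
        exact ⟨z + w, by simp only [Pi.add_apply, hz, hw]; push_cast; ring⟩
      · right; intro i
        obtain ⟨z, hz⟩ := ha i; obtain ⟨w, hw⟩ := hb i
        exact ⟨z + w, by simp only [Pi.add_apply, hz, hw]; push_cast; ring⟩
      · left; intro i
        obtain ⟨z, hz⟩ := ha i; obtain ⟨w, hw⟩ := hb i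
        exact ⟨z + w + 1, by simp only [Pi.add_apply, hz, hw]; push_cast; ring⟩
    · simp only [Pi.add_apply, Finset.sum_add_distrib, hka, hkb]
      push_cast; ring
  zero_mem' := ⟨Or.inl fun i => ⟨0, by simp⟩, 0, by simp⟩
  smul_mem' := by
    rintro c x ⟨hx, k, hk⟩
    refine ⟨?_, c * k, ?_⟩
    · rcases hx with hx | hx
      · left; intro i
        obtain ⟨z, hz⟩ := hx i
        exact ⟨c * z, by simp only [Pi.smul_apply, hz, zsmul_eq_mul]; push_cast; ring⟩
      · rcases Int.even_or_odd c with ⟨d, hd⟩ | ⟨d, hd⟩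
        · left; intro i
          obtain ⟨z, hz⟩ := hx i
          exact ⟨c * z + d, by simp only [Pi.smul_apply, hz, hd, zsmul_eq_mul]; push_cast; ring⟩
        · right; intro i
          obtain ⟨z, hz⟩ := hx i
          exact ⟨c * z + d, by simp only [Pi.smul_apply, hz, hd, zsmul_eq_mul]; push_cast; ring⟩
    · simp only [Pi.smul_apply, zsmul_eq_mul, ← Finset.mul_sum, hk]
      push_cast; ring

/-- The bilinear form on `E₈` induced by the standard inner product of `ℚ⁸`. -/
def E8form (x y : E8Lat) : ℚ := ∑ i, (x : Fin 8 → ℚ) i * (y : Fin 8 → ℚ) i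

namespace Stmt12
open Matrix

abbrev V8 := Fin 8 → ℚ

def e2 (j : Fin 8) : V8 := fun k => if k = j then 2 else 0

lemma e2_mem (j : Fin 8) : e2 j ∈ E8Lat := by
  refine ⟨Or.inl fun i => ?_, 1, ?_⟩
  · by_cases hij : i = j
    · exact ⟨2, by simp [e2, hij]⟩
    · exact ⟨0, by simp [e2, hij]⟩
  · simp [e2, Finset.sum_ite_eq']

def e2L (j : Fin 8) : E8Lat := ⟨e2 j, e2_mem j⟩

/-- the matrix of `h` -/
def matOf (h : E8Lat ≃ₗ[ℤ] E8Lat) : Matrix (Fin 8) (Fin 8) ℚ :=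
  Matrix.of fun i j => ((h (e2L j) : V8) i) / 2

lemma coords_half_int {x : V8} (hx : x ∈ E8Lat) (j : Fin 8) : ∃ c : ℤ, 2 * x j = c := by
  obtain ⟨hx1, -⟩ := hx
  rcases hx1 with hx1 | hx1
  · obtain ⟨z, hz⟩ := hx1 j; exact ⟨2 * z, by rw [hz]; push_cast; ring⟩
  · obtain ⟨z, hz⟩ := hx1 j; exact ⟨2 * z + 1, by rw [hz]; push_cast; ring⟩

lemma matOf_mulVec (h : E8Lat ≃ₗ[ℤ] E8Lat) (x : E8Lat) :
    (matOf h).mulVec (x : V8) = (h x : V8) := by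
  have hc : ∀ j, ∃ c : ℤ, 2 * (x : V8) j = c := coords_half_int x.2
  choose c hcc using hc
  have key : (4 : ℤ) • x = ∑ j, c j • e2L j := by
    apply Subtype.ext
    have : ((∑ j, c j • e2L j : E8Lat) : V8) = ∑ j, (c j : ℚ) • e2 j := by
      rw [Submodule.coe_sum]
      refine Finset.sum_congr rfl fun j _ => ?_
      funext k
      simp [e2L, Pi.smul_apply, zsmul_eq_mul]
    rw [this]
    funext k
    have : (∑ j, (c j : ℚ) • e2 j) k = ∑ j, (if k = j then (c j : ℚ) * 2 else 0) := by
      rw [Finset.sum_apply]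
      refine Finset.sum_congr rfl fun j _ => ?_
      by_cases hkj : k = j <;> simp [e2, hkj]
    rw [this, Finset.sum_ite_eq]
    simp [Pi.smul_apply, zsmul_eq_mul, ← hcc k]
    ring
  have happ : (4 : ℤ) • h x = ∑ j, c j • h (e2L j) := by
    rw [← _root_.map_smul, key, map_sum]
    exact Finset.sum_congr rfl fun j _ => _root_.map_smul h (c j) (e2L j)
  funext i
  have h4 : (4 : ℚ) * (h x : V8) i = ∑ j, (c j : ℚ) * (h (e2L j) : V8) i := by
    have := congrArg (fun v : E8Lat => (v : V8) i) happ
    simpa [Submodule.coe_sum, Pi.smul_apply, zsmul_eq_mul] using this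
  have : (matOf h).mulVec (x : V8) i = ∑ j, ((h (e2L j) : V8) i / 2) * (x : V8) j := by
    simp [matOf, Matrix.mulVec, dotProduct]
  rw [this]
  have : ∑ j, ((h (e2L j) : V8) i / 2) * (x : V8) j
      = (1/4) * ∑ j, (c j : ℚ) * (h (e2L j) : V8) i := by
    rw [Finset.mul_sum]
    refine Finset.sum_congr rfl fun j _ => ?_
    rw [← hcc j]; ring
  rw [this, ← h4]; ring

lemma matOf_pow_mulVec (h : E8Lat ≃ₗ[ℤ] E8Lat) (k : ℕ) (x : E8Lat) :
    ((matOf h) ^ k).mulVec (x : V8) = ((h ^ k) x : V8) := by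
  induction k with
  | zero => simp
  | succ n ih =>
    rw [pow_succ', ← Matrix.mulVec_mulVec, ih, matOf_mulVec h ((h ^ n) x), pow_succ']
    rfl



def dd (x y : V8) : ℚ := ∑ i, x i * y i

lemma dd_comm (x y : V8) : dd x y = dd y x := by
  unfold dd; exact Finset.sum_congr rfl fun i _ => mul_comm _ _

lemma dd_sub_left (x y z : V8) : dd (x - y) z = dd x z - dd y z := by
  unfold dd; rw [← Finset.sum_sub_distrib]
  exact Finset.sum_congr rfl fun i _ => by simp [sub_mul]

lemma dd_add_left (x y z : V8) : dd (x + y) z = dd x z + dd y z := by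
  unfold dd; rw [← Finset.sum_add_distrib]
  exact Finset.sum_congr rfl fun i _ => by simp [add_mul]

lemma dd_smul_left (c : ℚ) (x z : V8) : dd (c • x) z = c * dd x z := by
  unfold dd; rw [Finset.mul_sum]
  exact Finset.sum_congr rfl fun i _ => by simp; ring

lemma dd_self_nonneg (x : V8) : 0 ≤ dd x x :=
  Finset.sum_nonneg fun i _ => mul_self_nonneg _

lemma dd_self_eq_zero {x : V8} (h : dd x x = 0) : x = 0 := by
  have := (Finset.sum_eq_zero_iff_of_nonneg (fun i _ => mul_self_nonneg (x i))).1 h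
  funext i
  exact mul_self_eq_zero.1 (this i (Finset.mem_univ i))

lemma dd_self_pos {x : V8} (h : x ≠ 0) : 0 < dd x x :=
  lt_of_le_of_ne (dd_self_nonneg x) fun e => h (dd_self_eq_zero e.symm)

lemma int_dd {x y : V8} (hx : x ∈ E8Lat) (hy : y ∈ E8Lat) :
    ∃ z : ℤ, dd x y = z := by
  obtain ⟨hx1, kx, hkx⟩ := hx
  obtain ⟨hy1, ky, hky⟩ := hy
  unfold dd
  rcases hx1 with hx1 | hx1 <;> rcases hy1 with hy1 | hy1 <;>
    choose zx hzx using hx1 <;> choose zy hzy using hy1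
  · exact ⟨∑ i, zx i * zy i, by push_cast [hzx, hzy]; rfl⟩
  · have hsx : (∑ i, (zx i : ℚ)) = 2 * kx := by
      rw [← hkx]; exact Finset.sum_congr rfl fun i _ => (hzx i).symm
    refine ⟨∑ i, zx i * zy i + kx, ?_⟩
    have : ∑ i, x i * y i = (∑ i, ((zx i : ℚ) * (zy i : ℚ))) + (1/2) * ∑ i, (zx i : ℚ) := by
      rw [Finset.mul_sum, ← Finset.sum_add_distrib]
      refine Finset.sum_congr rfl fun i _ => ?_
      rw [hzx i, hzy i]; ring
    rw [this, hsx]; push_cast; ring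
  · have hsy : (∑ i, (zy i : ℚ)) = 2 * ky := by
      rw [← hky]; exact Finset.sum_congr rfl fun i _ => (hzy i).symm
    refine ⟨∑ i, zx i * zy i + ky, ?_⟩
    have : ∑ i, x i * y i = (∑ i, ((zx i : ℚ) * (zy i : ℚ))) + (1/2) * ∑ i, (zy i : ℚ) := by
      rw [Finset.mul_sum, ← Finset.sum_add_distrib]
      refine Finset.sum_congr rfl fun i _ => ?_
      rw [hzx i, hzy i]; ring
    rw [this, hsy]; push_cast; ring
  · have hsx : (∑ i, (zx i : ℚ)) = 2 * kx - 4 := by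
      have : (∑ i, x i) = (∑ i, (zx i : ℚ)) + 4 := by
        rw [Finset.sum_congr rfl fun i _ => hzx i, Finset.sum_add_distrib]
        norm_num
      rw [hkx] at this; linarith
    have hsy : (∑ i, (zy i : ℚ)) = 2 * ky - 4 := by
      have : (∑ i, y i) = (∑ i, (zy i : ℚ)) + 4 := by
        rw [Finset.sum_congr rfl fun i _ => hzy i, Finset.sum_add_distrib]
        norm_num
      rw [hky] at this; linarith
    refine ⟨∑ i, zx i * zy i + (kx - 2) + (ky - 2) + 2, ?_⟩
    have : ∑ i, x i * y i
        = (∑ i, ((zx i : ℚ) * (zy i : ℚ))) + (1/2) * ∑ i, (zx i : ℚ)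
          + (1/2) * ∑ i, (zy i : ℚ) + 8 * (1/4) := by
      rw [Finset.mul_sum, Finset.mul_sum, ← Finset.sum_add_distrib, ← Finset.sum_add_distrib]
      have : (8 : ℚ) * (1/4) = ∑ _i : Fin 8, (1/4 : ℚ) := by norm_num
      rw [this, ← Finset.sum_add_distrib]
      refine Finset.sum_congr rfl fun i _ => ?_
      rw [hzx i, hzy i]; ring
    rw [this, hsx, hsy]; push_cast; ring

lemma E8form_eq_dd (x y : E8Lat) : E8form x y = dd (x : V8) (y : V8) := rfl

lemma matOf_pow7 (h : E8Lat ≃ₗ[ℤ] E8Lat) (hord : orderOf h = 7) : (matOf h) ^ 7 = 1 := by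
  have h7 : h ^ 7 = 1 := by rw [← hord]; exact pow_orderOf_eq_one h
  ext i j
  have := matOf_pow_mulVec h 7 (e2L j)
  rw [h7] at this
  have h2 : ((matOf h) ^ 7).mulVec (e2 j) = e2 j := this
  have hsingle : e2 j = Pi.single j (2:ℚ) := by
    funext k; simp [e2, Pi.single_apply]
  rw [hsingle, Matrix.mulVec_single] at h2
  have := congrFun h2 i
  simp only [Pi.smul_apply, op_smul_eq_mul, Matrix.col_apply] at this
  simp only [Pi.single_apply] at this
  rw [Matrix.one_apply]
  by_cases hij : i = j
  · subst hij
    rw [if_pos rfl] at this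
    rw [if_pos rfl]
    linarith
  · rw [if_neg hij] at this
    rw [if_neg hij]
    linarith

lemma matOf_ne_one (h : E8Lat ≃ₗ[ℤ] E8Lat) (hord : orderOf h = 7) : matOf h ≠ 1 := by
  intro heq
  have h1 : h = 1 := by
    apply LinearEquiv.ext
    intro x
    have := matOf_mulVec h x
    rw [heq, Matrix.one_mulVec] at this
    exact Subtype.ext this.symm
  rw [h1, orderOf_one] at hord
  omega

lemma matOf_orth (h : E8Lat ≃ₗ[ℤ] E8Lat)
    (hB : ∀ x y : E8Lat, E8form (h x) (h y) = E8form x y) :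
    (matOf h)ᵀ * (matOf h) = 1 := by
  ext i j
  rw [Matrix.mul_apply]
  have : ∀ k, (matOf h)ᵀ i k * (matOf h) k j
      = (1/4) * ((h (e2L i) : V8) k * (h (e2L j) : V8) k) := by
    intro k
    simp [matOf, Matrix.transpose_apply]
    ring
  rw [Finset.sum_congr rfl fun k _ => this k, ← Finset.mul_sum]
  have : (∑ k, (h (e2L i) : V8) k * (h (e2L j) : V8) k) = E8form (h (e2L i)) (h (e2L j)) := rfl
  rw [this, hB]
  have : E8form (e2L i) (e2L j) = ∑ k, e2 i k * e2 j k := rfl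
  rw [this]
  by_cases hij : i = j
  · subst hij
    rw [Matrix.one_apply_eq]
    have : ∀ k, e2 i k * e2 i k = if k = i then (4:ℚ) else 0 := by
      intro k; by_cases hk : k = i <;> simp [e2, hk] <;> norm_num
    rw [Finset.sum_congr rfl fun k _ => this k, Finset.sum_ite_eq']
    simp
  · rw [Matrix.one_apply_ne hij]
    have : ∀ k, e2 i k * e2 j k = 0 := by
      intro k
      by_cases hk : k = i <;> by_cases hk2 : k = j
      · exact absurd (hk ▸ hk2 : (i:Fin 8) = j) hij
      · simp [e2, hk, hk2]; exact hij
      · simp [e2, hk, hk2]; exact fun hh => hij hh.symm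
      · simp [e2, hk, hk2]
    rw [Finset.sum_congr rfl fun k _ => this k]
    simp

lemma orth_pow {A : Matrix (Fin 8) (Fin 8) ℚ} (hA : Aᵀ * A = 1) (k : ℕ) :
    (A ^ k)ᵀ * (A ^ k) = 1 := by
  induction k with
  | zero => simp
  | succ n ih =>
    rw [pow_succ, Matrix.transpose_mul]
    calc Aᵀ * (A ^ n)ᵀ * (A ^ n * A) = Aᵀ * ((A ^ n)ᵀ * A ^ n) * A := by
          noncomm_ring
      _ = 1 := by rw [ih, Matrix.mul_one, hA]

lemma dd_mulVec_orth {A : Matrix (Fin 8) (Fin 8) ℚ} (hA : Aᵀ * A = 1) (x y : V8) :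
    dd (A.mulVec x) (A.mulVec y) = dd x y := by
  have e1 : dd (A.mulVec x) (A.mulVec y) = dotProduct (A.mulVec x) (A.mulVec y) := rfl
  rw [e1, ← Matrix.vecMul_transpose, ← dotProduct_mulVec,
    Matrix.mulVec_mulVec, hA, Matrix.one_mulVec]
  rfl


def cand : Finset ℚ := {-1, -(1/2), 0, 1/2, 1}

lemma neg_cand {a : ℚ} (ha : a ∈ cand) : -a ∈ cand := by
  simp only [cand, Finset.mem_insert, Finset.mem_singleton] at ha ⊢
  rcases ha with h|h|h|h|h <;> rw [h] <;> norm_num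

open Classical in
noncomputable def RootsF : Finset V8 :=
  (Fintype.piFinset fun _ : Fin 8 => cand).filter
    fun x => x ∈ E8Lat ∧ dd x x = 2

lemma mem_RootsF {x : V8} :
    x ∈ RootsF ↔ (∀ i, x i ∈ cand) ∧ x ∈ E8Lat ∧ dd x x = 2 := by
  classical
  rw [RootsF, Finset.mem_filter, Fintype.mem_piFinset]

def flipc (i l : Fin 8) (x : V8) : V8 := fun k => if k = i ∨ k = l then -x k else x k

lemma flipc_invol (i l : Fin 8) (x : V8) : flipc i l (flipc i l x) = x := by
  funext k
  by_cases hk : k = i ∨ k = l <;> simp [flipc, hk]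

lemma flipc_mem {i l : Fin 8} (hil : i ≠ l) {x : V8} (hx : x ∈ RootsF) :
    flipc i l x ∈ RootsF := by
  rw [mem_RootsF] at hx ⊢
  obtain ⟨hcand, ⟨hint, kx, hkx⟩, hdd⟩ := hx
  refine ⟨?_, ⟨?_, ?_⟩, ?_⟩
  · intro k
    by_cases hk : k = i ∨ k = l
    · simp only [flipc, if_pos hk]; exact neg_cand (hcand k)
    · simp only [flipc, if_neg hk]; exact hcand k
  · rcases hint with hint | hint
    · left; intro k
      obtain ⟨z, hz⟩ := hint k
      by_cases hk : k = i ∨ k = l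
      · exact ⟨-z, by simp [flipc, hk, hz]⟩
      · exact ⟨z, by simp [flipc, hk, hz]⟩
    · right; intro k
      obtain ⟨z, hz⟩ := hint k
      by_cases hk : k = i ∨ k = l
      · exact ⟨-z - 1, by simp [flipc, hk, hz]; push_cast; ring⟩
      · exact ⟨z, by simp [flipc, hk, hz]⟩
  · -- sum is even
    have hm : ∃ m : ℤ, x i + x l = m := by
      rcases hint with hint | hint
      · obtain ⟨zi, hzi⟩ := hint i
        obtain ⟨zl, hzl⟩ := hint l
        exact ⟨zi + zl, by rw [hzi, hzl]; push_cast; ring⟩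
      · obtain ⟨zi, hzi⟩ := hint i
        obtain ⟨zl, hzl⟩ := hint l
        exact ⟨zi + zl + 1, by rw [hzi, hzl]; push_cast; ring⟩
    obtain ⟨m, hm⟩ := hm
    refine ⟨kx - m, ?_⟩
    have hsplit : ∀ k, flipc i l x k
        = x k - ((if k = i then 2 * x k else 0) + (if k = l then 2 * x k else 0)) := by
      intro k
      by_cases hki : k = i <;> by_cases hkl : k = l
      · exact absurd (hki ▸ hkl : (i : Fin 8) = l) hil
      · simp [flipc, hki, hkl]; rw [if_neg hil]; ring
      · simp [flipc, hki, hkl]; rw [if_neg (Ne.symm hil)]; ring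
      · simp [flipc, hki, hkl]
    rw [Finset.sum_congr rfl fun k _ => hsplit k]
    rw [Finset.sum_sub_distrib, Finset.sum_add_distrib, Finset.sum_ite_eq', Finset.sum_ite_eq']
    simp only [Finset.mem_univ, if_pos]
    rw [hkx]
    have : (2:ℚ) * x i + 2 * x l = 2 * m := by rw [← hm]; ring
    push_cast
    linarith
  · unfold dd at hdd ⊢
    rw [← hdd]
    refine Finset.sum_congr rfl fun k _ => ?_
    by_cases hk : k = i ∨ k = l <;> simp [flipc, hk] <;> ring

lemma sum_flipc {i l : Fin 8} (hil : i ≠ l) (f : V8 → ℚ) :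
    ∑ x ∈ RootsF, f (flipc i l x) = ∑ x ∈ RootsF, f x := by
  refine Finset.sum_nbij' (fun x => flipc i l x) (fun x => flipc i l x) ?_ ?_ ?_ ?_ ?_
  · intro a ha; exact flipc_mem hil ha
  · intro a ha; exact flipc_mem hil ha
  · intro a _; exact flipc_invol i l a
  · intro a _; exact flipc_invol i l a
  · intro a _; rfl

lemma T_offdiag {i j : Fin 8} (hij : i ≠ j) : ∑ x ∈ RootsF, x i * x j = 0 := by
  have hex : ∃ l, l ≠ i ∧ l ≠ j := by
    have hcard : (Finset.univ \ ({i, j} : Finset (Fin 8))).Nonempty := by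
      rw [← Finset.card_pos]
      have h1 : ({i, j} : Finset (Fin 8)).card ≤ 2 := Finset.card_insert_le _ _ |>.trans (by simp)
      have h2 := Finset.card_sdiff_of_subset (Finset.subset_univ ({i, j} : Finset (Fin 8)))
      rw [h2]
      simp only [Finset.card_univ, Fintype.card_fin]
      omega
    obtain ⟨l, hl⟩ := hcard
    rw [Finset.mem_sdiff, Finset.mem_insert, Finset.mem_singleton] at hl
    exact ⟨l, fun e => hl.2 (Or.inl e), fun e => hl.2 (Or.inr e)⟩
  obtain ⟨l, hli, hlj⟩ := hex
  have hil : i ≠ l := fun e => hli e.symm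
  have key := sum_flipc hil (fun x => x i * x j)
  have hval : ∀ x : V8, (flipc i l x) i * (flipc i l x) j = -(x i * x j) := by
    intro x
    have h1 : flipc i l x i = -x i := by simp [flipc]
    have h2 : flipc i l x j = x j := by
      have : ¬(j = i ∨ j = l) := by
        rintro (e | e)
        · exact hij e.symm
        · exact hlj e.symm
      simp [flipc, this]
    rw [h1, h2]; ring
  simp only [hval] at key
  have : ∑ x ∈ RootsF, -(x i * x j) = -∑ x ∈ RootsF, x i * x j := by
    rw [← Finset.sum_neg_distrib]
  rw [this] at key
  linarith

lemma swap_mem (i j : Fin 8) {x : V8} (hx : x ∈ RootsF) :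
    (x ∘ (Equiv.swap i j)) ∈ RootsF := by
  rw [mem_RootsF] at hx ⊢
  obtain ⟨hcand, ⟨hint, kx, hkx⟩, hdd⟩ := hx
  refine ⟨fun k => hcand _, ⟨?_, kx, ?_⟩, ?_⟩
  · rcases hint with hint | hint
    · exact Or.inl fun k => hint _
    · exact Or.inr fun k => hint _
  · rw [← hkx]
    exact Equiv.sum_comp (Equiv.swap i j) x
  · unfold dd at hdd ⊢
    rw [← hdd]
    exact Equiv.sum_comp (Equiv.swap i j) (fun k => x k * x k)

lemma T_diag (i : Fin 8) : ∑ x ∈ RootsF, x i * x i = (RootsF.card : ℚ) / 4 := by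
  have hall : ∀ j, ∑ x ∈ RootsF, x j * x j = ∑ x ∈ RootsF, x 0 * x 0 := by
    intro j
    have key : ∑ x ∈ RootsF, (x ∘ Equiv.swap j 0) j * (x ∘ Equiv.swap j 0) j
        = ∑ x ∈ RootsF, x j * x j := by
      refine Finset.sum_nbij' (fun x => x ∘ Equiv.swap j 0) (fun x => x ∘ Equiv.swap j 0) ?_ ?_ ?_ ?_ ?_
      · intro a ha; exact swap_mem j 0 ha
      · intro a ha; exact swap_mem j 0 ha
      · intro a _
        funext k
        simp [Function.comp]
      · intro a _
        funext k
        simp [Function.comp]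
      · intro a _; rfl
    have hv : ∀ x : V8, (x ∘ Equiv.swap j 0) j * (x ∘ Equiv.swap j 0) j = x 0 * x 0 := by
      intro x; simp [Function.comp, Equiv.swap_apply_left]
    simp only [hv] at key
    exact key.symm
  have hsum : ∑ j : Fin 8, (∑ x ∈ RootsF, x j * x j) = 2 * RootsF.card := by
    rw [Finset.sum_comm]
    have : ∀ x ∈ RootsF, ∑ j : Fin 8, x j * x j = 2 := by
      intro x hx
      exact (mem_RootsF.1 hx).2.2
    rw [Finset.sum_congr rfl this, Finset.sum_const]
    simp [mul_comm]
  have h8 : (8 : ℚ) * (∑ x ∈ RootsF, x 0 * x 0) = 2 * RootsF.card := by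
    rw [← hsum, Finset.sum_congr rfl fun j _ => hall j, Finset.sum_const]
    simp only [Finset.card_univ, Fintype.card_fin, nsmul_eq_mul]
    norm_num
  rw [hall i]
  linarith

lemma sum_dd_mulVec (A : Matrix (Fin 8) (Fin 8) ℚ) :
    ∑ x ∈ RootsF, dd (A.mulVec x) x = (RootsF.card : ℚ) / 4 * Matrix.trace A := by
  have step1 : ∀ x : V8, dd (A.mulVec x) x = ∑ i, ∑ j, A i j * (x j * x i) := by
    intro x
    unfold dd
    refine Finset.sum_congr rfl fun i _ => ?_
    rw [Matrix.mulVec, dotProduct, Finset.sum_mul]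
    exact Finset.sum_congr rfl fun j _ => by ring
  rw [Finset.sum_congr rfl fun x _ => step1 x]
  rw [Finset.sum_comm]
  have step2 : ∀ i : Fin 8, ∑ x ∈ RootsF, ∑ j, A i j * (x j * x i)
      = A i i * ((RootsF.card : ℚ) / 4) := by
    intro i
    rw [Finset.sum_comm]
    have inner : ∀ j : Fin 8, ∑ x ∈ RootsF, A i j * (x j * x i)
        = A i j * ∑ x ∈ RootsF, x j * x i := by
      intro j; rw [Finset.mul_sum]
    rw [Finset.sum_congr rfl fun j _ => inner j]
    rw [Finset.sum_eq_single i]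
    · rw [T_diag]
    · intro j _ hji
      rw [T_offdiag hji]
      ring
    · intro hi; exact absurd (Finset.mem_univ i) hi
  rw [Finset.sum_congr rfl fun i _ => step2 i, ← Finset.sum_mul, Matrix.trace]
  rw [mul_comm]
  rfl


/-! ### explicit roots -/

def s1 (b : Bool) : ℚ := if b then 1 else -1

lemma s1_cases (b : Bool) : s1 b = 1 ∨ s1 b = -1 := by
  cases b <;> simp [s1]

lemma s1_inj {a b : Bool} (h : s1 a = s1 b) : a = b := by
  cases a <;> cases b <;> simp [s1] at h ⊢ <;> norm_num at h

def f1 (b : Fin 7 → Bool) : V8 :=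
  fun k => (if hk : (k : ℕ) < 7 then s1 (b ⟨k, hk⟩) else ∏ i : Fin 7, s1 (b i)) / 2

lemma f1_cases (b : Fin 7 → Bool) (k : Fin 8) : f1 b k = 1/2 ∨ f1 b k = -(1/2) := by
  unfold f1
  by_cases hk : (k : ℕ) < 7
  · rw [dif_pos hk]
    rcases s1_cases (b ⟨k, hk⟩) with h | h <;> rw [h] <;> norm_num
  · rw [dif_neg hk]
    have : (∏ i : Fin 7, s1 (b i)) = 1 ∨ (∏ i : Fin 7, s1 (b i)) = -1 := by
      refine Finset.prod_induction _ (fun x => x = 1 ∨ x = -1) ?_ (Or.inl rfl)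
        (fun i _ => s1_cases (b i))
      rintro x y (hx | hx) (hy | hy) <;> rw [hx, hy] <;> norm_num
    rcases this with h | h <;> rw [h] <;> norm_num

lemma f1_two_cases (b : Fin 7 → Bool) (k : Fin 8) : 2 * f1 b k = 1 ∨ 2 * f1 b k = -1 := by
  rcases f1_cases b k with h | h <;> rw [h] <;> norm_num

lemma sign_sum_prod {ι : Type*} [DecidableEq ι] (s : Finset ι) (e : ι → ℚ)
    (he : ∀ i ∈ s, e i = 1 ∨ e i = -1) :
    ∃ m : ℕ, (∑ i ∈ s, e i) = s.card - 2 * m ∧ (∏ i ∈ s, e i) = (-1) ^ m := by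
  induction s using Finset.induction_on with
  | empty => exact ⟨0, by simp⟩
  | @insert a t hnotmem ih =>
    obtain ⟨m, hm1, hm2⟩ := ih fun i hi => he i (Finset.mem_insert_of_mem hi)
    rcases he a (Finset.mem_insert_self a t) with ha | ha
    · refine ⟨m, ?_, ?_⟩
      · rw [Finset.sum_insert hnotmem, ha, hm1, Finset.card_insert_of_notMem hnotmem]
        push_cast; ring
      · rw [Finset.prod_insert hnotmem, ha, hm2, one_mul]
    · refine ⟨m + 1, ?_, ?_⟩
      · rw [Finset.sum_insert hnotmem, ha, hm1, Finset.card_insert_of_notMem hnotmem]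
        push_cast; ring
      · rw [Finset.prod_insert hnotmem, ha, hm2, pow_succ]
        ring

lemma f1_prod (b : Fin 7 → Bool) : (∏ k : Fin 8, (2 * f1 b k)) = 1 := by
  rw [Fin.prod_univ_castSucc]
  have h1 : ∀ k : Fin 7, 2 * f1 b (Fin.castSucc k) = s1 (b k) := by
    intro k
    have hk : ((Fin.castSucc k : Fin 8) : ℕ) < 7 := k.2
    unfold f1
    rw [dif_pos hk]
    have : (⟨(Fin.castSucc k : Fin 8), hk⟩ : Fin 7) = k := by
      apply Fin.ext; rfl
    rw [this]; ring
  have h2 : 2 * f1 b (Fin.last 7) = ∏ i : Fin 7, s1 (b i) := by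
    unfold f1
    rw [dif_neg (by decide : ¬ ((Fin.last 7 : Fin 8) : ℕ) < 7)]
    ring
  calc (∏ k : Fin 7, 2 * f1 b (Fin.castSucc k)) * (2 * f1 b (Fin.last 7))
      = (∏ k : Fin 7, s1 (b k)) * ∏ i : Fin 7, s1 (b i) := by
        rw [Finset.prod_congr rfl fun k _ => h1 k, h2]
    _ = 1 := by
        have hpm : (∏ i : Fin 7, s1 (b i)) = 1 ∨ (∏ i : Fin 7, s1 (b i)) = -1 :=
          Finset.prod_induction _ (fun x => x = 1 ∨ x = -1)
            (by rintro x y (hx | hx) (hy | hy) <;> rw [hx, hy] <;> norm_num) (Or.inl rfl)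
            (fun i _ => s1_cases (b i))
        rcases hpm with h | h <;> rw [h] <;> norm_num

lemma f1_mem (b : Fin 7 → Bool) : f1 b ∈ RootsF := by
  rw [mem_RootsF]
  refine ⟨?_, ⟨Or.inr ?_, ?_⟩, ?_⟩
  · intro k
    rcases f1_cases b k with h | h <;> rw [h] <;> simp [cand]
  · intro k
    rcases f1_cases b k with h | h
    · exact ⟨0, by rw [h]; norm_num⟩
    · exact ⟨-1, by rw [h]; push_cast; norm_num⟩
  · -- even sum
    obtain ⟨m, hm1, hm2⟩ := sign_sum_prod Finset.univ (fun k => 2 * f1 b k)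
      (fun k _ => f1_two_cases b k)
    rw [f1_prod b] at hm2
    have hmeven : Even m := by
      rcases Nat.even_or_odd m with he | ho
      · exact he
      · exfalso
        rw [Odd.neg_one_pow ho] at hm2
        norm_num at hm2
    obtain ⟨t, ht⟩ := hmeven
    refine ⟨2 - t, ?_⟩
    have h2 : ∑ k : Fin 8, 2 * f1 b k = 2 * ∑ k, f1 b k := by
      rw [Finset.mul_sum]
    rw [h2] at hm1
    simp only [Finset.card_univ, Fintype.card_fin] at hm1
    have : (m : ℚ) = t + t := by exact_mod_cast congrArg (Nat.cast : ℕ → ℚ) ht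
    push_cast
    push_cast at hm1
    linarith
  · unfold dd
    have : ∀ k : Fin 8, f1 b k * f1 b k = 1/4 := by
      intro k
      rcases f1_cases b k with h | h <;> rw [h] <;> norm_num
    rw [Finset.sum_congr rfl fun k _ => this k, Finset.sum_const]
    simp only [Finset.card_univ, Fintype.card_fin, nsmul_eq_mul]
    norm_num

lemma f1_inj : Function.Injective f1 := by
  intro b b' hbb
  funext i
  have := congrFun hbb ⟨(i : ℕ), by omega⟩
  unfold f1 at this
  have hlt : ((⟨(i : ℕ), by omega⟩ : Fin 8) : ℕ) < 7 := i.2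
  rw [dif_pos hlt, dif_pos hlt] at this
  have heq : (⟨((⟨(i : ℕ), by omega⟩ : Fin 8) : ℕ), hlt⟩ : Fin 7) = i := by
    apply Fin.ext; rfl
  rw [heq] at this
  exact s1_inj (by field_simp at this; exact_mod_cast this)

def uvec (p : Fin 8 × Fin 8) : V8 :=
  fun k => (if k = p.1 then 1 else 0) - (if k = p.2 then 1 else 0)

def vvec (p : Fin 8 × Fin 8) : V8 :=
  fun k => (if k = p.1 then 1 else 0) + (if k = p.2 then 1 else 0)

lemma uvec_sum (p : Fin 8 × Fin 8) : ∑ k, uvec p k = 0 := by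
  unfold uvec
  rw [Finset.sum_sub_distrib, Finset.sum_ite_eq', Finset.sum_ite_eq']
  simp

lemma vvec_sum (p : Fin 8 × Fin 8) : ∑ k, vvec p k = 2 := by
  unfold vvec
  rw [Finset.sum_add_distrib, Finset.sum_ite_eq', Finset.sum_ite_eq']
  norm_num

lemma uvec_mem {p : Fin 8 × Fin 8} (hp : p.1 ≠ p.2) : uvec p ∈ RootsF := by
  rw [mem_RootsF]
  refine ⟨?_, ⟨Or.inl ?_, 0, by rw [uvec_sum]; norm_num⟩, ?_⟩
  · intro k
    by_cases h1 : k = p.1 <;> by_cases h2 : k = p.2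
    · exact absurd (h1 ▸ h2 : p.1 = p.2) hp
    all_goals simp [uvec, h1, h2, cand, hp, Ne.symm hp]
  · intro k
    by_cases h1 : k = p.1 <;> by_cases h2 : k = p.2
    · exact absurd (h1 ▸ h2 : p.1 = p.2) hp
    · exact ⟨1, by simp [uvec, h1, h2, hp]⟩
    · exact ⟨-1, by rw [show uvec p k = -1 from by unfold uvec; rw [if_neg h1, if_pos h2]; ring]; norm_num⟩
    · exact ⟨0, by simp [uvec, h1, h2]⟩
  · unfold dd
    have : ∀ k, uvec p k * uvec p k
        = (if k = p.1 then 1 else 0) + (if k = p.2 then 1 else 0) := by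
      intro k
      by_cases h1 : k = p.1 <;> by_cases h2 : k = p.2
      · exact absurd (h1 ▸ h2 : p.1 = p.2) hp
      all_goals simp [uvec, h1, h2, hp, Ne.symm hp]
    rw [Finset.sum_congr rfl fun k _ => this k, Finset.sum_add_distrib,
      Finset.sum_ite_eq', Finset.sum_ite_eq']
    norm_num

lemma vvec_mem {p : Fin 8 × Fin 8} (hp : p.1 ≠ p.2) : vvec p ∈ RootsF := by
  rw [mem_RootsF]
  refine ⟨?_, ⟨Or.inl ?_, 1, by rw [vvec_sum]; norm_num⟩, ?_⟩
  · intro k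
    by_cases h1 : k = p.1 <;> by_cases h2 : k = p.2
    · exact absurd (h1 ▸ h2 : p.1 = p.2) hp
    all_goals simp [vvec, h1, h2, cand, hp, Ne.symm hp]
  · intro k
    by_cases h1 : k = p.1 <;> by_cases h2 : k = p.2
    · exact absurd (h1 ▸ h2 : p.1 = p.2) hp
    · exact ⟨1, by simp [vvec, h1, h2, hp]⟩
    · exact ⟨1, by simp [vvec, h1, h2, Ne.symm hp]⟩
    · exact ⟨0, by simp [vvec, h1, h2]⟩
  · unfold dd
    have : ∀ k, vvec p k * vvec p k
        = (if k = p.1 then 1 else 0) + (if k = p.2 then 1 else 0) := by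
      intro k
      by_cases h1 : k = p.1 <;> by_cases h2 : k = p.2
      · exact absurd (h1 ▸ h2 : p.1 = p.2) hp
      all_goals simp [vvec, h1, h2, hp, Ne.symm hp]
    rw [Finset.sum_congr rfl fun k _ => this k, Finset.sum_add_distrib,
      Finset.sum_ite_eq', Finset.sum_ite_eq']
    norm_num

noncomputable def S1 : Finset V8 := Finset.image f1 Finset.univ
noncomputable def S2 : Finset V8 :=
  Finset.image uvec ((Finset.univ : Finset (Fin 8 × Fin 8)).filter fun p => p.1 ≠ p.2)
noncomputable def S3 : Finset V8 :=
  Finset.image vvec ((Finset.univ : Finset (Fin 8 × Fin 8)).filter fun p => p.1 < p.2)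

lemma card_S1 : S1.card = 128 := by
  rw [S1, Finset.card_image_of_injective _ f1_inj, Finset.card_univ]
  simp

lemma uvec_eval1 {p : Fin 8 × Fin 8} (hp : p.1 ≠ p.2) : uvec p p.1 = 1 := by
  unfold uvec; rw [if_pos rfl, if_neg hp]; ring

lemma uvec_eval2 {p : Fin 8 × Fin 8} (hp : p.1 ≠ p.2) : uvec p p.2 = -1 := by
  unfold uvec; rw [if_pos rfl, if_neg (Ne.symm hp)]; ring

lemma vvec_eval1 {p : Fin 8 × Fin 8} (hp : p.1 ≠ p.2) : vvec p p.1 = 1 := by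
  unfold vvec; rw [if_pos rfl, if_neg hp]; ring

lemma vvec_eval2 {p : Fin 8 × Fin 8} (hp : p.1 ≠ p.2) : vvec p p.2 = 1 := by
  unfold vvec; rw [if_pos rfl, if_neg (Ne.symm hp)]; ring

lemma uvec_injOn : ∀ p ∈ ((Finset.univ : Finset (Fin 8 × Fin 8)).filter fun p => p.1 ≠ p.2),
    ∀ q ∈ ((Finset.univ : Finset (Fin 8 × Fin 8)).filter fun p => p.1 ≠ p.2),
    uvec p = uvec q → p = q := by
  intro p hp q hq hpq
  rw [Finset.mem_filter] at hp hq
  have hp12 : p.1 ≠ p.2 := hp.2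
  have h1 := congrFun hpq p.1
  have h2 := congrFun hpq p.2
  rw [uvec_eval1 hp12] at h1
  rw [uvec_eval2 hp12] at h2
  by_cases e1 : p.1 = q.1
  · by_cases e2 : p.2 = q.2
    · exact Prod.ext e1 e2
    · exfalso
      by_cases e3 : p.2 = q.1
      · rw [show uvec q p.2 = 1 from by unfold uvec; rw [if_pos e3, if_neg e2]; ring] at h2
        norm_num at h2
      · rw [show uvec q p.2 = 0 from by unfold uvec; rw [if_neg e3, if_neg e2]; ring] at h2
        norm_num at h2
  · exfalso
    by_cases e4 : p.1 = q.2
    · rw [show uvec q p.1 = -1 from by unfold uvec; rw [if_neg e1, if_pos e4]; ring] at h1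
      norm_num at h1
    · rw [show uvec q p.1 = 0 from by unfold uvec; rw [if_neg e1, if_neg e4]; ring] at h1
      norm_num at h1

lemma vvec_injOn : ∀ p ∈ ((Finset.univ : Finset (Fin 8 × Fin 8)).filter fun p => p.1 < p.2),
    ∀ q ∈ ((Finset.univ : Finset (Fin 8 × Fin 8)).filter fun p => p.1 < p.2),
    vvec p = vvec q → p = q := by
  intro p hp q hq hpq
  rw [Finset.mem_filter] at hp hq
  have hp12 : p.1 ≠ p.2 := Fin.ne_of_lt hp.2
  have hq12 : q.1 ≠ q.2 := Fin.ne_of_lt hq.2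
  have h1 := congrFun hpq p.1
  have h2 := congrFun hpq p.2
  rw [vvec_eval1 hp12] at h1
  rw [vvec_eval2 hp12] at h2
  by_cases e1 : p.1 = q.1
  · by_cases e2 : p.2 = q.2
    · exact Prod.ext e1 e2
    · exfalso
      by_cases e3 : p.2 = q.1
      · rw [← e1] at e3
        exact hp12 (Eq.symm e3)
      · rw [show vvec q p.2 = 0 from by unfold vvec; rw [if_neg e3, if_neg e2]; ring] at h2
        norm_num at h2
  · exfalso
    by_cases e4 : p.1 = q.2
    · -- p.1 = q.2; consider vvec at q.1
      have h3 := congrFun hpq q.1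
      rw [vvec_eval1 hq12] at h3
      by_cases e5 : q.1 = p.1
      · exact e1 (Eq.symm e5)
      · by_cases e6 : q.1 = p.2
        · have hcon : p.1 < p.1 := by
            calc p.1 < p.2 := hp.2
              _ = q.1 := Eq.symm e6
              _ < q.2 := hq.2
              _ = p.1 := Eq.symm e4
          exact absurd hcon (lt_irrefl _)
        · rw [show vvec p q.1 = 0 from by
            unfold vvec; rw [if_neg e5, if_neg e6]; ring] at h3
          norm_num at h3
    · rw [show vvec q p.1 = 0 from by unfold vvec; rw [if_neg e1, if_neg e4]; ring] at h1
      norm_num at h1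

lemma card_S2 : S2.card = 56 := by
  rw [S2, Finset.card_image_of_injOn (fun p hp q hq => uvec_injOn p hp q hq)]
  decide

lemma card_S3 : S3.card = 28 := by
  rw [S3, Finset.card_image_of_injOn (fun p hp q hq => vvec_injOn p hp q hq)]
  decide

lemma card_RootsF : 212 ≤ RootsF.card := by
  classical
  have hsub : S1 ∪ S2 ∪ S3 ⊆ RootsF := by
    intro x hx
    rcases Finset.mem_union.1 hx with hx | hx
    · rcases Finset.mem_union.1 hx with hx | hx
      · obtain ⟨b, -, rfl⟩ := Finset.mem_image.1 hx
        exact f1_mem b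
      · obtain ⟨p, hp, rfl⟩ := Finset.mem_image.1 hx
        exact uvec_mem (Finset.mem_filter.1 hp).2
    · obtain ⟨p, hp, rfl⟩ := Finset.mem_image.1 hx
      exact vvec_mem (Fin.ne_of_lt (Finset.mem_filter.1 hp).2)
  have hd12 : Disjoint S1 S2 := by
    rw [Finset.disjoint_left]
    rintro x hx1 hx2
    obtain ⟨b, -, rfl⟩ := Finset.mem_image.1 hx1
    obtain ⟨p, hp, hux⟩ := Finset.mem_image.1 hx2
    have hp' : p.1 ≠ p.2 := (Finset.mem_filter.1 hp).2
    have h0 := congrFun hux p.1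
    rw [uvec_eval1 hp'] at h0
    rcases f1_cases b p.1 with hc | hc <;> rw [hc] at h0 <;> norm_num at h0
  have hd13 : Disjoint S1 S3 := by
    rw [Finset.disjoint_left]
    rintro x hx1 hx2
    obtain ⟨b, -, rfl⟩ := Finset.mem_image.1 hx1
    obtain ⟨p, hp, hux⟩ := Finset.mem_image.1 hx2
    have hp' : p.1 ≠ p.2 := Fin.ne_of_lt (Finset.mem_filter.1 hp).2
    have h0 := congrFun hux p.1
    rw [vvec_eval1 hp'] at h0
    rcases f1_cases b p.1 with hc | hc <;> rw [hc] at h0 <;> norm_num at h0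
  have hd23 : Disjoint S2 S3 := by
    rw [Finset.disjoint_left]
    rintro x hx2 hx3
    obtain ⟨p, hp, rfl⟩ := Finset.mem_image.1 hx2
    obtain ⟨q, hq, hux⟩ := Finset.mem_image.1 hx3
    have hsu := uvec_sum p
    rw [← hux] at hsu
    rw [vvec_sum q] at hsu
    norm_num at hsu
  have hd1_23 : Disjoint S1 (S2 ∪ S3) := Finset.disjoint_union_right.2 ⟨hd12, hd13⟩
  have hcard : (S1 ∪ S2 ∪ S3).card = 212 := by
    rw [Finset.union_assoc, Finset.card_union_of_disjoint hd1_23,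
      Finset.card_union_of_disjoint hd23, card_S1, card_S2, card_S3]
  calc (212 : ℕ) = (S1 ∪ S2 ∪ S3).card := hcard.symm
    _ ≤ RootsF.card := Finset.card_le_card hsub


section Endo5
open Polynomial
lemma sum_mulVec {ι : Type*} (s : Finset ι) (A : ι → Matrix (Fin 8) (Fin 8) ℚ) (v : V8) :
    (∑ k ∈ s, A k).mulVec v = ∑ k ∈ s, (A k).mulVec v := by
  induction s using Finset.cons_induction with
  | empty => simp [Matrix.zero_mulVec]
  | cons a t hat ih => rw [Finset.sum_cons, Finset.sum_cons, Matrix.add_mulVec, ih]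

section Endo
variable (M : Matrix (Fin 8) (Fin 8) ℚ)

noncomputable def Qm : Matrix (Fin 8) (Fin 8) ℚ := ∑ k ∈ Finset.range 7, M ^ k

def Esub : Submodule ℚ V8 := LinearMap.ker (Matrix.mulVecLin (M - 1))

noncomputable def Wsub : Submodule ℚ V8 := LinearMap.ker (Matrix.mulVecLin (Qm M))

lemma mem_Esub {x : V8} : x ∈ Esub M ↔ M.mulVec x = x := by
  rw [Esub, LinearMap.mem_ker, Matrix.mulVecLin_apply, Matrix.sub_mulVec, Matrix.one_mulVec,
    sub_eq_zero]

lemma mem_Wsub {x : V8} : x ∈ Wsub M ↔ (Qm M).mulVec x = 0 := by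
  rw [Wsub, LinearMap.mem_ker, Matrix.mulVecLin_apply]

lemma pow_fix {x : V8} (hx : M.mulVec x = x) (k : ℕ) : (M ^ k).mulVec x = x := by
  induction k with
  | zero => simp
  | succ n ih => rw [pow_succ', ← Matrix.mulVec_mulVec, ih, hx]

lemma Qm_fix {x : V8} (hx : M.mulVec x = x) : (Qm M).mulVec x = (7 : ℚ) • x := by
  rw [Qm, sum_mulVec]
  rw [Finset.sum_congr rfl fun k _ => pow_fix M hx k, Finset.sum_const, Finset.card_range]
  funext i
  simp

lemma Qm_mul_sub (hM7 : M ^ 7 = 1) : Qm M * (M - 1) = 0 := by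
  rw [Qm, geom_sum_mul, hM7, sub_self]

lemma sub_mul_Qm (hM7 : M ^ 7 = 1) : (M - 1) * Qm M = 0 := by
  rw [Qm, mul_geom_sum, hM7, sub_self]

lemma range_Qm (hM7 : M ^ 7 = 1) : LinearMap.range (Matrix.mulVecLin (Qm M)) = Esub M := by
  apply le_antisymm
  · rintro y ⟨x, rfl⟩
    rw [mem_Esub, Matrix.mulVecLin_apply, Matrix.mulVec_mulVec]
    have : M * Qm M = Qm M := by
      have := sub_mul_Qm M hM7
      rw [sub_mul, one_mul, sub_eq_zero] at this
      exact this
    rw [this]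
  · intro x hx
    rw [mem_Esub] at hx
    refine ⟨(7 : ℚ)⁻¹ • x, ?_⟩
    rw [Matrix.mulVecLin_apply, Matrix.mulVec_smul, Qm_fix M hx]
    rw [smul_smul]
    norm_num

lemma finrank_Esub_add_Wsub (hM7 : M ^ 7 = 1) :
    Module.finrank ℚ (Esub M) + Module.finrank ℚ (Wsub M) = 8 := by
  have := LinearMap.finrank_range_add_finrank_ker (Matrix.mulVecLin (Qm M))
  rw [range_Qm M hM7] at this
  rw [← Wsub] at this
  rw [this]
  exact Module.finrank_fin_fun ℚ

lemma Wsub_ne_bot (hM7 : M ^ 7 = 1) (hMne : M ≠ 1) : Wsub M ≠ ⊥ := by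
  intro hbot
  apply hMne
  have hinj : ∀ v : V8, (Qm M).mulVec v = 0 → v = 0 := by
    intro v hv
    have : v ∈ Wsub M := (mem_Wsub M).2 hv
    rw [hbot] at this
    simpa using this
  have hall : ∀ v : V8, (M - 1).mulVec v = 0 := by
    intro v
    apply hinj
    rw [Matrix.mulVec_mulVec, Qm_mul_sub M hM7, Matrix.zero_mulVec]
  ext i j
  have := congrFun (hall (Pi.single j 1)) i
  rw [Matrix.mulVec_single] at this
  simp only [mul_one, Pi.zero_apply] at this
  have h2 : M i j - (1 : Matrix (Fin 8) (Fin 8) ℚ) i j = 0 := by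
    simpa [Matrix.sub_apply] using this
  linarith [h2]

-- the cyclotomic-type polynomial
noncomputable def p7 : ℚ[X] := ∑ i ∈ Finset.range 7, X ^ i

lemma p7_eq : p7 = cyclotomic 7 ℚ := by
  haveI : Fact (Nat.Prime 7) := ⟨by norm_num⟩
  rw [cyclotomic_prime ℚ 7, p7]

lemma p7_irr : Irreducible p7 := by
  rw [p7_eq]
  exact cyclotomic.irreducible_rat (by norm_num)

lemma p7_natDegree : p7.natDegree = 6 := by
  rw [p7_eq, natDegree_cyclotomic]
  rfl

lemma p7_ne_zero : p7 ≠ 0 := by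
  intro h
  have := p7_natDegree
  rw [h] at this
  simp at this

-- W is invariant under M
lemma Wsub_inv {x : V8} (hx : x ∈ Wsub M) : M.mulVec x ∈ Wsub M := by
  rw [mem_Wsub] at hx ⊢
  rw [Matrix.mulVec_mulVec]
  have hcomm : Qm M * M = M * Qm M := by
    rw [Qm, Finset.sum_mul, Finset.mul_sum]
    exact Finset.sum_congr rfl fun k _ => pow_mul_comm' M k
  rw [hcomm, ← Matrix.mulVec_mulVec, hx, Matrix.mulVec_zero]

noncomputable def fW : Wsub M →ₗ[ℚ] Wsub M :=
  (Matrix.mulVecLin M).restrict (fun x hx => Wsub_inv M hx)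

lemma fW_pow_coe (k : ℕ) (w : Wsub M) : (((fW M) ^ k) w : V8) = (M ^ k).mulVec w := by
  induction k with
  | zero => simp
  | succ n ih =>
    rw [pow_succ', pow_succ']
    rw [Module.End.mul_apply]
    have : ((fW M) (((fW M) ^ n) w) : V8) = M.mulVec (((fW M) ^ n) w : V8) := rfl
    rw [this, ih, Matrix.mulVec_mulVec]

lemma aeval_fW : (Polynomial.aeval (fW M)) p7 = 0 := by
  rw [p7, map_sum]
  apply LinearMap.ext
  intro w
  apply Subtype.ext
  rw [LinearMap.sum_apply, Submodule.coe_sum]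
  have h2 : ∀ k ∈ Finset.range 7, ((((Polynomial.aeval (fW M)) ((X : ℚ[X]) ^ k)) w : Wsub M) : V8)
      = (M ^ k).mulVec w := by
    intro k _
    rw [map_pow, aeval_X]
    exact fW_pow_coe M k w
  rw [Finset.sum_congr rfl h2, ← sum_mulVec, ← Qm, (mem_Wsub M).1 w.2]
  rfl


noncomputable def phi7 : AdjoinRoot p7 →+* Module.End ℚ (Wsub M) :=
  Ideal.Quotient.lift (Ideal.span {p7}) (Polynomial.aeval (fW M)).toRingHom
    (by
      intro a ha
      rw [Ideal.mem_span_singleton'] at ha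
      obtain ⟨c, rfl⟩ := ha
      have he : (Polynomial.aeval (fW M)).toRingHom (c * p7) = (Polynomial.aeval (fW M)) (c * p7) := rfl
      rw [he, _root_.map_mul, aeval_fW M, mul_zero])

lemma phi7_mk (a : ℚ[X]) :
    phi7 M (AdjoinRoot.mk p7 a) = Polynomial.aeval (fW M) a :=
  Ideal.Quotient.lift_mk _ _ _

set_option synthInstance.maxHeartbeats 1000000 in
set_option maxHeartbeats 1000000 in
lemma finrank_Wsub (hM7 : M ^ 7 = 1) (hMne : M ≠ 1) :
    Module.finrank ℚ (Wsub M) = 6 := by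
  haveI : Fact (Irreducible p7) := ⟨p7_irr⟩
  letI : Module (AdjoinRoot p7) (Wsub M) := Module.compHom _ (phi7 M)
  haveI : IsScalarTower ℚ (AdjoinRoot p7) (Wsub M) := by
    constructor
    intro q k w
    obtain ⟨a, rfl⟩ := AdjoinRoot.mk_surjective k
    have h1 : q • (AdjoinRoot.mk p7) a = (AdjoinRoot.mk p7) (q • a) := by
      rw [AdjoinRoot.smul_mk]
    rw [h1]
    show phi7 M ((AdjoinRoot.mk p7) (q • a)) w = q • (phi7 M ((AdjoinRoot.mk p7) a) w)
    rw [phi7_mk, phi7_mk, _root_.map_smul, LinearMap.smul_apply]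
  have hfree : Module.Free (AdjoinRoot p7) (Wsub M) := Module.Free.of_divisionRing _ _
  haveI : Module.Finite (AdjoinRoot p7) (Wsub M) :=
    Module.Finite.of_restrictScalars_finite ℚ _ _
  have htower := Module.finrank_mul_finrank ℚ (AdjoinRoot p7) (Wsub M)
  have hK : Module.finrank ℚ (AdjoinRoot p7) = 6 := by
    rw [(AdjoinRoot.powerBasis p7_ne_zero).finrank, AdjoinRoot.powerBasis_dim, p7_natDegree]
  haveI : Nontrivial (Wsub M) := by
    rw [Submodule.nontrivial_iff_ne_bot]
    exact Wsub_ne_bot M hM7 hMne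
  have hpos : 0 < Module.finrank (AdjoinRoot p7) (Wsub M) := Module.finrank_pos
  have hle : Module.finrank ℚ (Wsub M) ≤ 8 := by
    have := Submodule.finrank_le (Wsub M)
    rw [Module.finrank_fin_fun] at this
    exact this
  rw [hK] at htower
  omega

lemma finrank_Esub (hM7 : M ^ 7 = 1) (hMne : M ≠ 1) :
    Module.finrank ℚ (Esub M) = 2 := by
  have h1 := finrank_Esub_add_Wsub M hM7
  rw [finrank_Wsub M hM7 hMne] at h1
  omega

lemma trace_Qm (hM7 : M ^ 7 = 1) (hMne : M ≠ 1) : (Qm M).trace = 14 := by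
  have hproj : LinearMap.IsProj (Esub M) (Matrix.mulVecLin ((7 : ℚ)⁻¹ • Qm M)) := by
    constructor
    · intro x
      rw [mem_Esub, Matrix.mulVecLin_apply, Matrix.smul_mulVec,
        Matrix.mulVec_smul, Matrix.mulVec_mulVec]
      have : M * Qm M = Qm M := by
        have := sub_mul_Qm M hM7
        rw [sub_mul, one_mul, sub_eq_zero] at this
        exact this
      rw [this]
    · intro x hx
      rw [mem_Esub] at hx
      rw [Matrix.mulVecLin_apply, Matrix.smul_mulVec, Qm_fix M hx, smul_smul]
      norm_num
  have htr := hproj.trace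
  have hbr : ∀ A : Matrix (Fin 8) (Fin 8) ℚ,
      LinearMap.trace ℚ V8 (Matrix.mulVecLin A) = A.trace := by
    intro A
    rw [LinearMap.trace_eq_matrix_trace ℚ (Pi.basisFun ℚ (Fin 8)),
      LinearMap.toMatrix_eq_toMatrix']
    congr 1
    have e : Matrix.mulVecLin A = Matrix.toLin' A := rfl
    rw [e, LinearMap.toMatrix'_toLin']
  have h2 : ((7 : ℚ)⁻¹ • Qm M).trace = (Module.finrank ℚ (Esub M) : ℚ) := by
    rw [← hbr]
    exact htr
  rw [finrank_Esub M hM7 hMne] at h2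
  rw [Matrix.trace_smul] at h2
  have : (Qm M).trace = 7 * ((7:ℚ)⁻¹ • (Qm M).trace) := by
    rw [smul_eq_mul]; ring
  rw [this, h2]
  norm_num

end Endo
end Endo5


lemma dd_sub_sub (v w : V8) : dd (v - w) (v - w) = dd v v - 2 * dd v w + dd w w := by
  unfold dd
  simp only [Pi.sub_apply]
  rw [Finset.sum_congr rfl fun i _ => (by ring :
    (v i - w i) * (v i - w i) = (v i * v i + w i * w i) - 2 * (v i * w i))]
  rw [Finset.sum_sub_distrib, Finset.sum_add_distrib, ← Finset.mul_sum]
  ring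

lemma dd_add_add (v w : V8) : dd (v + w) (v + w) = dd v v + 2 * dd v w + dd w w := by
  unfold dd
  simp only [Pi.add_apply]
  rw [Finset.sum_congr rfl fun i _ => (by ring :
    (v i + w i) * (v i + w i) = (v i * v i + w i * w i) + 2 * (v i * w i))]
  rw [Finset.sum_add_distrib, Finset.sum_add_distrib, ← Finset.mul_sum]
  ring

lemma dd_sum_left {ι : Type*} (s : Finset ι) (a : ι → V8) (z : V8) :
    dd (∑ k ∈ s, a k) z = ∑ k ∈ s, dd (a k) z := by
  induction s using Finset.cons_induction with
  | empty => simp [dd]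
  | cons i t hit ih =>
    rw [Finset.sum_cons, Finset.sum_cons, dd_add_left, ih]

lemma root_range {v w : V8} (hv : v ∈ RootsF) (hw : w ∈ RootsF) :
    dd v w ∈ ({-2, -1, 0, 1, 2} : Finset ℚ) := by
  obtain ⟨-, hvL, hvn⟩ := mem_RootsF.1 hv
  obtain ⟨-, hwL, hwn⟩ := mem_RootsF.1 hw
  obtain ⟨z, hz⟩ := int_dd hvL hwL
  have h1 : 0 ≤ dd (v - w) (v - w) := dd_self_nonneg _
  have h2 : 0 ≤ dd (v + w) (v + w) := dd_self_nonneg _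
  rw [dd_sub_sub, hvn, hwn] at h1
  rw [dd_add_add, hvn, hwn] at h2
  have hz1' : z ≤ 2 := by
    have : (z : ℚ) ≤ 2 := by rw [← hz]; linarith
    exact_mod_cast this
  have hz2' : -2 ≤ z := by
    have : (-2 : ℚ) ≤ z := by rw [← hz]; linarith
    exact_mod_cast this
  rw [hz]
  simp only [Finset.mem_insert, Finset.mem_singleton]
  interval_cases z
  · left; norm_num
  · right; left; norm_num
  · right; right; left; norm_num
  · right; right; right; left; norm_num
  · right; right; right; right; norm_num

section Endo6
open Polynomial

lemma fixed_card_le (M : Matrix (Fin 8) (Fin 8) ℚ) (hM7 : M ^ 7 = 1) (hMne : M ≠ 1) :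
    (RootsF.filter fun x => M.mulVec x = x).card ≤ 25 := by
  classical
  set FR := RootsF.filter fun x => M.mulVec x = x with hFR
  by_contra hgt
  push_neg at hgt
  obtain ⟨v1, hv1⟩ := Finset.card_pos.1 (by omega : 0 < FR.card)
  have hv1R : v1 ∈ RootsF := (Finset.mem_filter.1 hv1).1
  have hv1f : M.mulVec v1 = v1 := (Finset.mem_filter.1 hv1).2
  have hv1n : dd v1 v1 = 2 := (mem_RootsF.1 hv1R).2.2
  have hex : ∃ v2 ∈ FR, v2 ≠ v1 ∧ v2 ≠ -v1 := by
    by_contra hno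
    push_neg at hno
    have hsub : FR ⊆ insert v1 {-v1} := by
      intro w hw
      rcases eq_or_ne w v1 with rfl | hne1
      · exact Finset.mem_insert_self _ _
      · rw [hno w hw hne1]
        exact Finset.mem_insert_of_mem (Finset.mem_singleton_self _)
    have hc2 := Finset.card_le_card hsub
    have h2 : (insert v1 ({-v1} : Finset V8)).card ≤ 2 :=
      (Finset.card_insert_le _ _).trans (by simp)
    omega
  obtain ⟨v2, hv2, hne1, hne2⟩ := hex
  have hv2R : v2 ∈ RootsF := (Finset.mem_filter.1 hv2).1
  have hv2f : M.mulVec v2 = v2 := (Finset.mem_filter.1 hv2).2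
  have hv2n : dd v2 v2 = 2 := (mem_RootsF.1 hv2R).2.2
  set c := dd v1 v2 with hc
  have hclt : c < 2 := by
    have h1 : 0 ≤ dd (v1 - v2) (v1 - v2) := dd_self_nonneg _
    rw [dd_sub_sub, hv1n, hv2n] at h1
    rcases lt_or_eq_of_le (by linarith : c ≤ 2) with hlt | heq
    · exact hlt
    · exfalso
      have hz : dd (v1 - v2) (v1 - v2) = 0 := by
        rw [dd_sub_sub, hv1n, hv2n, ← hc, heq]; ring
      have hz2 := dd_self_eq_zero hz
      rw [sub_eq_zero] at hz2
      exact hne1 hz2.symm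
  have hcgt : -2 < c := by
    have h1 : 0 ≤ dd (v1 + v2) (v1 + v2) := dd_self_nonneg _
    rw [dd_add_add, hv1n, hv2n] at h1
    rcases lt_or_eq_of_le (by linarith : -2 ≤ c) with hlt | heq
    · exact hlt
    · exfalso
      have hz : dd (v1 + v2) (v1 + v2) = 0 := by
        rw [dd_add_add, hv1n, hv2n, ← hc, ← heq]; ring
      have hz2 := dd_self_eq_zero hz
      have : v2 = -v1 := by
        have := eq_neg_of_add_eq_zero_right hz2
        exact this
      exact hne2 this
  have hEdim : Module.finrank ℚ (Esub M) = 2 := finrank_Esub M hM7 hMne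
  have hmapsto : ∀ w ∈ FR, (fun w => (dd w v1, dd w v2)) w
      ∈ (({-2, -1, 0, 1, 2} : Finset ℚ) ×ˢ ({-2, -1, 0, 1, 2} : Finset ℚ)) := by
    intro w hw
    have hwR : w ∈ RootsF := (Finset.mem_filter.1 hw).1
    exact Finset.mem_product.2 ⟨root_range hwR hv1R, root_range hwR hv2R⟩
  have hinj : Set.InjOn (fun w => (dd w v1, dd w v2)) ↑FR := by
    intro w hw w' hw' heq
    rw [Finset.mem_coe] at hw hw'
    simp only [Prod.mk.injEq] at heq
    have hwf : M.mulVec w = w := (Finset.mem_filter.1 hw).2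
    have hw'f : M.mulVec w' = w' := (Finset.mem_filter.1 hw').2
    by_contra hne
    set u := w - w' with hu
    have hu1 : dd u v1 = 0 := by rw [hu, dd_sub_left, heq.1, sub_self]
    have hu2 : dd u v2 = 0 := by rw [hu, dd_sub_left, heq.2, sub_self]
    have hune : u ≠ 0 := by
      rw [hu, sub_ne_zero]
      exact hne
    have hv1E : v1 ∈ Esub M := (mem_Esub M).2 hv1f
    have hv2E : v2 ∈ Esub M := (mem_Esub M).2 hv2f
    have huE : u ∈ Esub M := by
      rw [mem_Esub, hu, Matrix.mulVec_sub, hwf, hw'f]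
    set vv : Fin 3 → (Esub M) := ![⟨v1, hv1E⟩, ⟨v2, hv2E⟩, ⟨u, huE⟩] with hvv
    have hli : LinearIndependent ℚ vv := by
      rw [Fintype.linearIndependent_iff]
      intro g hg
      have hg' : g 0 • v1 + g 1 • v2 + g 2 • u = 0 := by
        have hcoe := congrArg (fun z : Esub M => (z : V8)) hg
        simpa [vv, Fin.sum_univ_three] using hcoe
      have hsplit : ∀ z : V8, dd (g 0 • v1 + g 1 • v2 + g 2 • u) z
          = g 0 * dd v1 z + g 1 * dd v2 z + g 2 * dd u z := by
        intro z
        rw [dd_add_left, dd_add_left, dd_smul_left, dd_smul_left, dd_smul_left]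
      have hzero : ∀ z : V8, dd (0 : V8) z = 0 := by
        intro z; unfold dd; simp
      have hdu : g 0 * dd v1 u + g 1 * dd v2 u + g 2 * dd u u = 0 := by
        rw [← hsplit u, hg', hzero]
      rw [dd_comm v1 u, hu1, dd_comm v2 u, hu2] at hdu
      have hg2 : g 2 = 0 := by
        have hpos := dd_self_pos hune
        have h0 : g 2 * dd u u = 0 := by linarith
        rcases mul_eq_zero.1 h0 with hh | hh
        · exact hh
        · exact absurd hh (ne_of_gt hpos)
      have hd1 : g 0 * dd v1 v1 + g 1 * dd v2 v1 + g 2 * dd u v1 = 0 := by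
        rw [← hsplit v1, hg', hzero]
      have hd2 : g 0 * dd v1 v2 + g 1 * dd v2 v2 + g 2 * dd u v2 = 0 := by
        rw [← hsplit v2, hg', hzero]
      rw [hv1n, dd_comm v2 v1, ← hc, hu1, hg2] at hd1
      rw [hv2n, ← hc, hu2, hg2] at hd2
      have hcsq : c * c < 4 := by nlinarith
      have hg0 : g 0 = 0 := by
        have hcomb : g 0 * (4 - c * c) = 0 := by nlinarith [hd1, hd2]
        rcases mul_eq_zero.1 hcomb with hh | hh
        · exact hh
        · exfalso; linarith
      have hg1 : g 1 = 0 := by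
        rw [hg0] at hd2
        have h2c : (2 : ℚ) * g 1 = 0 := by linarith
        linarith
      intro i
      fin_cases i
      · exact hg0
      · exact hg1
      · exact hg2
    have hcard3 := hli.fintype_card_le_finrank
    rw [hEdim] at hcard3
    simp at hcard3
  have hcard := Finset.card_le_card_of_injOn _ hmapsto hinj
  have h25 : (({-2, -1, 0, 1, 2} : Finset ℚ) ×ˢ ({-2, -1, 0, 1, 2} : Finset ℚ)).card = 25 := by
    rw [Finset.card_product]
    norm_num
  omega

end Endo6

lemma fix_of_pow_fix (M : Matrix (Fin 8) (Fin 8) ℚ) (hM7 : M ^ 7 = 1) {y : V8} {k : ℕ}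
    (hk1 : 1 ≤ k) (hk6 : k ≤ 6) (hky : (M ^ k).mulVec y = y) : M.mulVec y = y := by
  have hrep : ∀ m, (M ^ (m * k)).mulVec y = y := by
    intro m
    induction m with
    | zero => simp
    | succ n ih =>
      have he : (n + 1) * k = n * k + k := by ring
      rw [he, pow_add, ← Matrix.mulVec_mulVec, hky, ih]
  have hpowmod : ∀ n : ℕ, (M ^ n) = M ^ (n % 7) := by
    intro n
    conv_lhs => rw [← Nat.div_add_mod n 7]
    rw [pow_add, pow_mul, hM7, one_pow, one_mul]
  obtain ⟨m, hm⟩ : ∃ m, (m * k) % 7 = 1 := by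
    interval_cases k
    · exact ⟨1, by norm_num⟩
    · exact ⟨4, by norm_num⟩
    · exact ⟨5, by norm_num⟩
    · exact ⟨2, by norm_num⟩
    · exact ⟨3, by norm_num⟩
    · exact ⟨6, by norm_num⟩
  have hfin := hrep m
  rw [hpowmod (m * k), hm, pow_one] at hfin
  exact hfin

end Stmt12

/-- There is no rootless element of order 7 in `O(E8)`: every isometry `h`
of the `E₈` lattice of order 7 satisfies that `(h−1)E8` contains a vector of norm 2. -/
theorem stmt_12 (h : E8Lat ≃ₗ[ℤ] E8Lat)
    (hB : ∀ x y : E8Lat, E8form (h x) (h y) = E8form x y)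
    (hord : orderOf h = 7) :
    ∃ x : E8Lat, E8form (h x - x) (h x - x) = 2 := by
  classical
  open Stmt12 in
  by_contra hc
  push_neg at hc
  set M := Stmt12.matOf h with hMdef
  have hM7 : M ^ 7 = 1 := Stmt12.matOf_pow7 h hord
  have hMne : M ≠ 1 := Stmt12.matOf_ne_one h hord
  have horth : M.transpose * M = 1 := Stmt12.matOf_orth h hB
  -- step 1: no power moves a root with inner product exactly 1
  have hno1 : ∀ y : E8Lat, Stmt12.dd (y : Stmt12.V8) (y : Stmt12.V8) = 2 →
      ∀ k, 1 ≤ k → k ≤ 6 →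
      Stmt12.dd ((M ^ k).mulVec (y : Stmt12.V8)) (y : Stmt12.V8) ≠ 1 := by
    intro y hy k hk1 hk6 heq1
    set x' : E8Lat := ∑ j ∈ Finset.range k, (h ^ j) y with hx'
    have hcoe : ((h x' - x' : E8Lat) : Stmt12.V8)
        = (M ^ k).mulVec (y : Stmt12.V8) - (y : Stmt12.V8) := by
      have hsum : (h x' - x' : E8Lat)
          = ∑ j ∈ Finset.range k, ((h ^ (j + 1)) y - (h ^ j) y) := by
        rw [hx', map_sum, ← Finset.sum_sub_distrib]
        refine Finset.sum_congr rfl fun j _ => ?_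
        congr 1
        rw [pow_succ']
        rfl
      rw [hsum, Submodule.coe_sum]
      have hterm : ∀ j ∈ Finset.range k, (((h ^ (j + 1)) y - (h ^ j) y : E8Lat) : Stmt12.V8)
          = (fun j => (((h ^ j) y : E8Lat) : Stmt12.V8)) (j + 1)
            - (fun j => (((h ^ j) y : E8Lat) : Stmt12.V8)) j := fun j _ => rfl
      rw [Finset.sum_congr rfl hterm,
        Finset.sum_range_sub (fun j => (((h ^ j) y : E8Lat) : Stmt12.V8)) k]
      rw [← Stmt12.matOf_pow_mulVec h k y]
      congr 1
    have hMk2 : Stmt12.dd ((M ^ k).mulVec (y : Stmt12.V8)) ((M ^ k).mulVec (y : Stmt12.V8)) = 2 := by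
      rw [Stmt12.dd_mulVec_orth (Stmt12.orth_pow horth k), hy]
    have hent : E8form (h x' - x') (h x' - x') = 2 := by
      rw [Stmt12.E8form_eq_dd, hcoe, Stmt12.dd_sub_sub, hMk2, heq1, hy]
      ring
    exact hc x' hent
  -- step 2: per-root bounds
  have hQsplit : ∀ y : Stmt12.V8, (Stmt12.Qm M).mulVec y
      = ∑ k ∈ Finset.range 7, (M ^ k).mulVec y := fun y => by
    rw [Stmt12.Qm, Stmt12.sum_mulVec]
  have hfix14 : ∀ y ∈ Stmt12.RootsF, M.mulVec y = y →
      Stmt12.dd ((Stmt12.Qm M).mulVec y) y = 14 := by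
    intro y hy hfix
    rw [hQsplit, Stmt12.dd_sum_left]
    have hterm : ∀ k ∈ Finset.range 7, Stmt12.dd ((M ^ k).mulVec y) y = 2 := by
      intro k _
      rw [Stmt12.pow_fix M hfix k, (Stmt12.mem_RootsF.1 hy).2.2]
    rw [Finset.sum_congr rfl hterm, Finset.sum_const, Finset.card_range]
    norm_num
  have hnf2 : ∀ y ∈ Stmt12.RootsF, M.mulVec y ≠ y →
      Stmt12.dd ((Stmt12.Qm M).mulVec y) y ≤ 2 := by
    intro y hy hnfix
    obtain ⟨-, hyL, hyn⟩ := Stmt12.mem_RootsF.1 hy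
    rw [hQsplit, Stmt12.dd_sum_left]
    have hbound : ∀ k ∈ Finset.range 7,
        Stmt12.dd ((M ^ k).mulVec y) y ≤ (if k = 0 then 2 else 0) := by
      intro k hk
      rw [Finset.mem_range] at hk
      by_cases hk0 : k = 0
      · subst hk0
        rw [if_pos rfl, pow_zero, Matrix.one_mulVec, hyn]
      · rw [if_neg hk0]
        set Y : E8Lat := ⟨y, hyL⟩ with hY
        have hkY : (M ^ k).mulVec y = (((h ^ k) Y : E8Lat) : Stmt12.V8) :=
          Stmt12.matOf_pow_mulVec h k Y
        have hlat : (M ^ k).mulVec y ∈ E8Lat := by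
          rw [hkY]; exact ((h ^ k) Y).2
        obtain ⟨z, hz⟩ := Stmt12.int_dd hlat hyL
        have hMk2 : Stmt12.dd ((M ^ k).mulVec y) ((M ^ k).mulVec y) = 2 := by
          rw [Stmt12.dd_mulVec_orth (Stmt12.orth_pow horth k), hyn]
        have hub : Stmt12.dd ((M ^ k).mulVec y) y ≤ 2 := by
          have h0 := Stmt12.dd_self_nonneg ((M ^ k).mulVec y - y)
          rw [Stmt12.dd_sub_sub, hMk2, hyn] at h0
          linarith
        have hne2 : Stmt12.dd ((M ^ k).mulVec y) y ≠ 2 := by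
          intro he2
          have h0 : Stmt12.dd ((M ^ k).mulVec y - y) ((M ^ k).mulVec y - y) = 0 := by
            rw [Stmt12.dd_sub_sub, hMk2, hyn, he2]; ring
          have := Stmt12.dd_self_eq_zero h0
          rw [sub_eq_zero] at this
          exact hnfix (Stmt12.fix_of_pow_fix M hM7 (by omega) (by omega) this)
        have hne1 : Stmt12.dd ((M ^ k).mulVec y) y ≠ 1 :=
          hno1 Y hyn k (by omega) (by omega)
        have hz2 : z ≤ 2 := by exact_mod_cast hz ▸ hub
        have hz2' : z ≠ 2 := fun he => hne2 (by rw [hz, he]; norm_num)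
        have hz1' : z ≠ 1 := fun he => hne1 (by rw [hz, he]; norm_num)
        have : z ≤ 0 := by omega
        rw [hz]
        exact_mod_cast this
    calc ∑ k ∈ Finset.range 7, Stmt12.dd ((M ^ k).mulVec y) y
        ≤ ∑ k ∈ Finset.range 7, (if k = 0 then (2:ℚ) else 0) :=
          Finset.sum_le_sum hbound
      _ = 2 := by rw [Finset.sum_ite_eq' (Finset.range 7) 0 (fun _ => (2:ℚ))]; simp
  -- step 3: global count
  set r := Stmt12.RootsF.card with hr
  set F := (Stmt12.RootsF.filter fun x => M.mulVec x = x).card with hF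
  have htrace : (Stmt12.Qm M).trace = 14 := Stmt12.trace_Qm M hM7 hMne
  have hglobal : ∑ y ∈ Stmt12.RootsF, Stmt12.dd ((Stmt12.Qm M).mulVec y) y
      = (r : ℚ) / 4 * 14 := by
    have := Stmt12.sum_dd_mulVec (Stmt12.Qm M)
    rw [htrace] at this
    exact this
  have hsplitsum := Finset.sum_filter_add_sum_filter_not Stmt12.RootsF
    (fun x => M.mulVec x = x) (fun y => Stmt12.dd ((Stmt12.Qm M).mulVec y) y)
  have hA : ∑ y ∈ Stmt12.RootsF.filter (fun x => M.mulVec x = x),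
      Stmt12.dd ((Stmt12.Qm M).mulVec y) y = 14 * F := by
    rw [Finset.sum_congr rfl fun y hy =>
      hfix14 y (Finset.mem_filter.1 hy).1 (Finset.mem_filter.1 hy).2]
    rw [Finset.sum_const, hF, nsmul_eq_mul]
    ring
  have hcount := Finset.card_filter_add_card_filter_not
    (s := Stmt12.RootsF) (p := fun x => M.mulVec x = x)
  have hBle : ∑ y ∈ Stmt12.RootsF.filter (fun x => ¬ M.mulVec x = x),
      Stmt12.dd ((Stmt12.Qm M).mulVec y) y
      ≤ 2 * ((Stmt12.RootsF.filter fun x => ¬ M.mulVec x = x).card : ℚ) := by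
    calc ∑ y ∈ Stmt12.RootsF.filter (fun x => ¬ M.mulVec x = x),
        Stmt12.dd ((Stmt12.Qm M).mulVec y) y
        ≤ ∑ _y ∈ Stmt12.RootsF.filter (fun x => ¬ M.mulVec x = x), (2:ℚ) :=
          Finset.sum_le_sum fun y hy =>
            hnf2 y (Finset.mem_filter.1 hy).1 (Finset.mem_filter.1 hy).2
      _ = 2 * ((Stmt12.RootsF.filter fun x => ¬ M.mulVec x = x).card : ℚ) := by
          rw [Finset.sum_const, nsmul_eq_mul]; ring
  have hkey : (r : ℚ) / 4 * 14 ≤ 14 * F + 2 * ((r : ℚ) - F) := by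
    rw [← hglobal] at *
    have hc2 : ((Stmt12.RootsF.filter fun x => ¬ M.mulVec x = x).card : ℚ)
        = (r : ℚ) - F := by
      have : F + (Stmt12.RootsF.filter fun x => ¬ M.mulVec x = x).card = r := hcount
      push_cast [← this]
      ring
    rw [hc2] at hBle
    rw [← hsplitsum, hA]
    linarith
  have h212 : 212 ≤ r := Stmt12.card_RootsF
  have h25 : F ≤ 25 := Stmt12.fixed_card_le M hM7 hMne
  have hrF : (r : ℚ) ≤ 8 * F := by linarith
  have hrF' : r ≤ 8 * F := by exact_mod_cast hrF
  omega
end
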